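/- arXiv:2310.06288 — 7 statements merged into one kernel-verified Lean document; each statement's English description precedes it below -/
import Mathlib

section
/- Let (x_1,...,x_m) be a vector of real numbers with x_1+...+x_m = 0 such that no cyclically consecutive sum x_{i+1}+x_{i+2}+...+x_j with fewer than m terms vanishes (indices read modulo m). Then for each r in {0,1,...,m-1}, exactly one of the m cyclic shifts of (x_1,...,x_m) has exactly r positive partial sums. -/
open Finset
open Fin.NatCast

private def Txt {m : ℕ} [NeZero m] (x : Fin m → ℝ) (n : ℕ) : ℝ :=
  ∑ l ∈ Finset.range n, x ((l : Fin m))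

private lemma txt_key {m : ℕ} [NeZero m] (x : Fin m → ℝ) (n t : ℕ) :
    ∑ l ∈ Finset.range t, x (((n + l : ℕ) : Fin m)) = Txt x (n + t) - Txt x n := by
  induction t with
  | zero => simp
  | succ t ih =>
      have hstep : ∀ k : ℕ, Txt x (k + 1) = Txt x k + x ((k : Fin m)) := fun k =>
        Finset.sum_range_succ _ k
      rw [Finset.sum_range_succ, ih, show n + (t + 1) = (n + t) + 1 from rfl, hstep]
      ring

private lemma txt_per {m : ℕ} [NeZero m] (x : Fin m → ℝ) (hsum : ∑ i, x i = 0) (n : ℕ) :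
    Txt x (n + m) = Txt x n := by
  have h := txt_key x n m
  have h0 : ∑ l ∈ Finset.range m, x (((n + l : ℕ) : Fin m)) = 0 := by
    have e1 : ∀ l : ℕ, ((n + l : ℕ) : Fin m) = (n : Fin m) + (l : Fin m) := by
      intro l; push_cast; ring
    calc ∑ l ∈ Finset.range m, x (((n + l : ℕ) : Fin m))
        = ∑ l ∈ Finset.range m, x ((n : Fin m) + (l : Fin m)) := by
          exact Finset.sum_congr rfl fun l _ => by rw [e1]
      _ = ∑ j : Fin m, x ((n : Fin m) + j) := by
          rw [← Fin.sum_univ_eq_sum_range (fun l => x ((n : Fin m) + (l : Fin m))) m]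
          simp
      _ = ∑ j : Fin m, x j := Fintype.sum_equiv (Equiv.addLeft ((n : ℕ) : Fin m)) _ _ (fun j => rfl)
      _ = 0 := hsum
  linarith

private lemma txt_mod {m : ℕ} [NeZero m] (x : Fin m → ℝ) (hsum : ∑ i, x i = 0) (n : ℕ) :
    Txt x n = Txt x (n % m) := by
  have key : ∀ q r : ℕ, Txt x (r + m * q) = Txt x r := by
    intro q
    induction q with
    | zero => simp
    | succ q ih =>
        intro r
        rw [Nat.mul_succ, ← Nat.add_assoc, txt_per x hsum, ih]
  conv_lhs => rw [← Nat.mod_add_div n m]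
  exact key (n / m) (n % m)
/-- **Spitzer's theorem.** Let `x : Fin m → ℝ` with `∑ x i = 0`, such that no
cyclically consecutive sum with fewer than `m` terms vanishes: for every starting
point `i` and length `t` with `1 ≤ t < m`, `∑_{l < t} x (i + l) ≠ 0`.  Then for
each `r ∈ {0, …, m-1}`, exactly one of the `m` cyclic shifts of `x` has exactly
`r` positive partial sums. -/
theorem stmt1 (m : ℕ) [NeZero m] (x : Fin m → ℝ) (hsum : ∑ i, x i = 0)
    (hnz : ∀ i : Fin m, ∀ t : ℕ, 1 ≤ t → t < m →
      ∑ l ∈ Finset.range t, x (i + Fin.ofNat m l) ≠ 0)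
    (r : ℕ) (hr : r < m) :
    ∃! i : Fin m,
      (Finset.univ.filter (fun k : Fin m =>
        0 < ∑ l ∈ Finset.range ((k : ℕ) + 1), x (i + Fin.ofNat m l))).card = r := by
  change ∃! i : Fin m, (Finset.univ.filter (fun k : Fin m =>
    0 < ∑ l ∈ Finset.range ((k : ℕ) + 1), x (i + (l : Fin m)))).card = r
  replace hnz : ∀ i : Fin m, ∀ t : ℕ, 1 ≤ t → t < m →
      ∑ l ∈ Finset.range t, x (i + (l : Fin m)) ≠ 0 := hnz
  classical
  set T : Fin m → ℝ := fun j => Txt x j.val with hT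
  have shiftSum : ∀ (i : Fin m) (t : ℕ),
      ∑ l ∈ Finset.range t, x (i + (l : Fin m)) = Txt x (i.val + t) - T i := by
    intro i t
    rw [← txt_key x i.val t]
    refine Finset.sum_congr rfl fun l _ => ?_
    congr 1
    simp [Nat.cast_add, Fin.cast_val_eq_self]
  have Tval : ∀ (i : Fin m) (t : ℕ), Txt x (i.val + t) = T (i + (t : Fin m)) := by
    intro i t
    have h1 : i + (t : Fin m) = ((i.val + t : ℕ) : Fin m) := by
      simp [Nat.cast_add, Fin.cast_val_eq_self]
    rw [h1, hT]
    simp only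
    rw [Fin.val_natCast]
    exact txt_mod x hsum _
  have Tinj : Function.Injective T := by
    intro i j hij
    by_contra hne
    have h0 : j - i ≠ 0 := sub_ne_zero.mpr (Ne.symm hne)
    have ht1 : 1 ≤ (j - i).val := by
      rcases Nat.eq_zero_or_pos (j - i).val with h | h
      · exact absurd (Fin.ext h : j - i = 0) h0
      · exact h
    have hcancel : i + (j - i) = j := by rw [add_comm, sub_add_cancel]
    refine hnz i (j - i).val ht1 (j - i).isLt ?_
    rw [shiftSum, Tval, Fin.cast_val_eq_self, hcancel, hij]
    ring
  have countEq : ∀ i : Fin m,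
      (Finset.univ.filter (fun k : Fin m =>
        0 < ∑ l ∈ Finset.range ((k : ℕ) + 1), x (i + (l : Fin m)))).card
      = (Finset.univ.filter fun j => T i < T j).card := by
    intro i
    have hpred : ∀ k : Fin m,
        (0 < ∑ l ∈ Finset.range ((k : ℕ) + 1), x (i + (l : Fin m))) ↔
          T i < T ((i + 1) + k) := by
      intro k
      rw [shiftSum, Tval]
      have h3 : i + (((k : ℕ) + 1 : ℕ) : Fin m) = (i + 1) + k := by
        push_cast [Fin.cast_val_eq_self]
        abel
      rw [h3, sub_pos]
    rw [Finset.filter_congr fun k _ => hpred k]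
    exact Finset.card_equiv (Equiv.addLeft (i + 1)) (fun k => by simp [Equiv.addLeft])
  set N : Fin m → ℕ := fun i => (Finset.univ.filter fun j => T i < T j).card with hN
  have Nlt : ∀ i, N i < m := by
    intro i
    have hsub : (Finset.univ.filter fun j => T i < T j) ⊂ Finset.univ := by
      rw [Finset.ssubset_univ_iff]
      intro h
      have : i ∈ Finset.univ.filter fun j => T i < T j := by
        rw [h]; exact Finset.mem_univ i
      simp at this
    calc N i < Finset.univ.card := Finset.card_lt_card hsub
      _ = m := by simp
  have hmono : ∀ i j, T i < T j → N j < N i := by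
    intro i j hij
    apply Finset.card_lt_card
    rw [Finset.ssubset_def]
    constructor
    · intro k hk
      simp only [Finset.mem_filter, Finset.mem_univ, true_and] at hk ⊢
      exact hij.trans hk
    · intro hsub
      have hj : j ∈ Finset.univ.filter fun k => T i < T k := by simp [hij]
      have := hsub hj
      simp at this
  have Ninj : Function.Injective N := by
    intro i j h
    by_contra hne
    rcases lt_trichotomy (T i) (T j) with hlt | heq | hgt
    · have := hmono i j hlt; omega
    · exact hne (Tinj heq)
    · have := hmono j i hgt; omega
  set F : Fin m → Fin m := fun i => ⟨N i, Nlt i⟩ with hF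
  have Finj : Function.Injective F := by
    intro i j h
    exact Ninj (congrArg Fin.val h)
  have Fsurj : Function.Surjective F := Finite.injective_iff_surjective.mp Finj
  obtain ⟨i, hi⟩ := Fsurj ⟨r, hr⟩
  refine ⟨i, (countEq i).trans (congrArg Fin.val hi), ?_⟩
  intro y hy
  apply Finj
  rw [hi]
  exact Fin.ext ((countEq y).symm.trans hy)
end

section
/- The number of lattice paths from (0,0) to (kn,0) consisting of (k−1)n up steps (1,1) and n down steps (1,1−k) that never go below the x-axis equals the Fuss–Catalan number C_{n,k} = (1/(kn+1))·binom(kn+1, n). -/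
open Finset
open Fin.NatCast Fin.CommRing

namespace Raney

/-- step value -/
def step (k : ℕ) (b : Bool) : ℤ := if b then 1 else 1 - k

variable {N : ℕ} [NeZero N] {k : ℕ}

/-- periodic extension of the step sequence -/
def bseq (k : ℕ) (g : Fin N → Bool) (i : ℕ) : ℤ := step k (g i)

/-- prefix sums -/
def A (k : ℕ) (g : Fin N → Bool) (m : ℕ) : ℤ := ∑ i ∈ range m, bseq k g i

def rot (r : ℕ) (g : Fin N → Bool) : Fin N → Bool := fun i => g (i + (r : Fin N))

def downs (g : Fin N → Bool) : ℕ := (univ.filter (fun i => g i = false)).card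

def Pos (k : ℕ) (g : Fin N → Bool) : Prop := ∀ m, 1 ≤ m → m ≤ N → 1 ≤ A k g m

def Good (k : ℕ) (g : Fin N → Bool) (r : ℕ) : Prop := ∀ m, r < m → A k g r < A k g m

lemma bseq_periodic (g : Fin N → Bool) (i : ℕ) : bseq k g (i + N) = bseq k g i := by
  unfold bseq; congr 1; push_cast; simp

lemma bseq_rot (g : Fin N → Bool) (r i : ℕ) : bseq k (rot r g) i = bseq k g (i + r) := by
  unfold bseq rot; congr 1; push_cast; ring_nf

lemma A_succ (g : Fin N → Bool) (m : ℕ) : A k g (m + 1) = A k g m + bseq k g m :=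
  Finset.sum_range_succ _ _

lemma A_rot (g : Fin N → Bool) (r m : ℕ) : A k (rot r g) m = A k g (r + m) - A k g r := by
  induction m with
  | zero => simp [A]
  | succ m ih =>
      rw [A_succ, ih, bseq_rot, ← add_assoc, A_succ]
      ring_nf

lemma A_total (g : Fin N → Bool) : A k g N = (N : ℤ) - k * downs g := by
  have h : A k g N = ∑ i : Fin N, step k (g i) := by
    rw [A, ← Fin.sum_univ_eq_sum_range (fun i => bseq k g i) N]
    exact Finset.sum_congr rfl (fun i _ => by unfold bseq; rw [Fin.cast_val_eq_self])
  rw [h]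
  have : ∀ i : Fin N, step k (g i) = 1 - (if g i = false then (k:ℤ) else 0) := by
    intro i; unfold step; cases g i <;> simp
  rw [Finset.sum_congr rfl (fun i _ => this i), Finset.sum_sub_distrib, Finset.sum_ite,
    Finset.sum_const, Finset.sum_const]
  simp [downs, mul_comm]

lemma A_add_N (g : Fin N → Bool) (m : ℕ) : A k g (m + N) = A k g m + A k g N := by
  induction m with
  | zero => simp [A]
  | succ m ih =>
      have : m + 1 + N = (m + N) + 1 := by ring
      rw [this, A_succ, ih, bseq_periodic, A_succ]; ring

lemma A_mul_add (g : Fin N → Bool) (q s : ℕ) : A k g (q * N + s) = q * A k g N + A k g s := by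
  induction q with
  | zero => simp
  | succ q ih =>
      have : (q + 1) * N + s = (q * N + s) + N := by ring
      rw [this, A_add_N, ih]; push_cast; ring

/-- `Pos (rot r g) ↔ Good g r` when the total is 1. -/
lemma good_of_pos_rot {g : Fin N → Bool} (ht : A k g N = 1) (r : ℕ)
    (h : Pos k (rot r g)) : Good k g r := by
  intro m
  induction m using Nat.strong_induction_on with
  | _ m ih =>
    intro hm
    rcases le_or_gt m (r + N) with hle | hgt
    · -- m = r + j with 1 ≤ j ≤ N
      have hj : 1 ≤ m - r ∧ m - r ≤ N := ⟨by omega, by omega⟩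
      have h4 := h (m - r) hj.1 hj.2
      rw [A_rot, show r + (m - r) = m by omega] at h4
      linarith
    · have hmN : r < m - N := by omega
      have hlt : m - N < m :=
        Nat.sub_lt (lt_of_le_of_lt (Nat.zero_le _) hm) (Nat.pos_of_ne_zero (NeZero.ne N))
      have h4 := ih (m - N) hlt hmN
      have h2 : A k g ((m - N) + N) = A k g (m - N) + 1 := by rw [A_add_N, ht]
      rw [show m - N + N = m by omega] at h2
      linarith

lemma pos_rot_of_good {g : Fin N → Bool} (ht : A k g N = 1) (r : ℕ)
    (h : Good k g r) : Pos k (rot r g) := by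
  intro m h1 hm
  rw [A_rot]
  have := h (r + m) (by omega)
  linarith

lemma good_unique {g : Fin N → Bool} (ht : A k g N = 1) {r r' : ℕ}
    (hr : r < N) (hr' : r' < N) (h : Good k g r) (h' : Good k g r') : r = r' := by
  by_contra hne
  wlog hlt : r < r' generalizing r r'
  · exact this hr' hr h' h (Ne.symm hne) (by omega)
  have h1 : A k g r < A k g r' := h r' hlt
  have h2 : A k g r' < A k g (r + N) := h' (r + N) (by omega)
  have h3 : A k g (r + N) = A k g r + 1 := by rw [A_add_N, ht]
  linarith

lemma good_exists {g : Fin N → Bool} (ht : A k g N = 1) : ∃ r < N, Good k g r := by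
  have hN : 0 < N := Nat.pos_of_ne_zero (NeZero.ne N)
  -- minimum of A over range N, take the largest argmin
  have hne : ((range N).image (fun s => A k g s)).Nonempty := by
    simp [Finset.image_nonempty, hN, Finset.nonempty_range_iff]
    omega
  set μ := ((range N).image (fun s => A k g s)).min' hne with hμ
  have hT : ((range N).filter (fun s => A k g s = μ)).Nonempty := by
    obtain ⟨s, hs, hsv⟩ := Finset.mem_image.mp (Finset.min'_mem _ hne)
    exact ⟨s, Finset.mem_filter.mpr ⟨hs, hsv⟩⟩
  set r := ((range N).filter (fun s => A k g s = μ)).max' hT with hr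
  have hrmem := Finset.max'_mem _ hT
  rw [← hr] at hrmem
  have hrN : r < N := Finset.mem_range.mp (Finset.mem_filter.mp hrmem).1
  have hrval : A k g r = μ := (Finset.mem_filter.mp hrmem).2
  have hmin : ∀ s < N, μ ≤ A k g s := fun s hs =>
    Finset.min'_le _ _ (Finset.mem_image.mpr ⟨s, Finset.mem_range.mpr hs, rfl⟩)
  refine ⟨r, hrN, fun m hm => ?_⟩
  have h5 := A_mul_add (k := k) g (m / N) (m % N)
  rw [ht, mul_one,
    show m / N * N + m % N = m by rw [Nat.mul_comm (m / N) N]; exact Nat.div_add_mod m N] at h5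
  have hmod : μ ≤ A k g (m % N) := hmin _ (Nat.mod_lt _ hN)
  rcases Nat.eq_zero_or_pos (m / N) with hq | hq
  · -- m < N, m > r
    have hmN : m < N := by
      by_contra hc
      have := Nat.div_le_div_right (c := N) (Nat.le_of_not_lt hc)
      rw [Nat.div_self hN] at this
      omega
    have hneq : A k g m ≠ μ := by
      intro h
      have : m ≤ r := Finset.le_max' _ m (Finset.mem_filter.mpr ⟨Finset.mem_range.mpr hmN, h⟩)
      omega
    have h6 := hmin m hmN
    rw [hrval]
    exact lt_of_le_of_ne h6 (Ne.symm hneq)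
  · have h7 : (1 : ℤ) ≤ ((m / N : ℕ) : ℤ) := by exact_mod_cast hq
    rw [hrval]
    linarith


open scoped Classical

lemma rot_rot (r r' : ℕ) (g : Fin N → Bool) : rot r (rot r' g) = rot (r + r') g := by
  funext i
  unfold rot
  congr 1
  push_cast
  ring

lemma rot_N (g : Fin N → Bool) : rot N g = g := by
  funext i
  unfold rot
  congr 1
  simp

lemma downs_rot (r : ℕ) (g : Fin N → Bool) : downs (rot r g) = downs g := by
  unfold downs rot
  apply Finset.card_bij' (fun i _ => i + (r : Fin N)) (fun i _ => i - (r : Fin N))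
  · intro a ha
    simp only [Finset.mem_filter, Finset.mem_univ, true_and] at ha ⊢
    exact ha
  · intro a ha
    simp only [Finset.mem_filter, Finset.mem_univ, true_and] at ha ⊢
    rwa [sub_add_cancel]
  · intro a _
    exact add_sub_cancel_right a _
  · intro a _
    exact sub_add_cancel a _

lemma card_good_eq_one {g : Fin N → Bool} (ht : A k g N = 1) :
    ((range N).filter (fun r => Good k g r)).card = 1 := by
  obtain ⟨r, hrN, hr⟩ := good_exists ht
  rw [Finset.card_eq_one]
  refine ⟨r, Finset.eq_singleton_iff_unique_mem.mpr ⟨Finset.mem_filter.mpr ⟨Finset.mem_range.mpr hrN, hr⟩, ?_⟩⟩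
  intro x hx
  obtain ⟨hxN, hxg⟩ := Finset.mem_filter.mp hx
  exact good_unique ht (Finset.mem_range.mp hxN) hrN hxg hr

lemma main_count (k n : ℕ) (htot : ((N : ℤ) - k * n) = 1) :
    (univ.filter (fun g : Fin N → Bool => downs g = n)).card
      = (univ.filter (fun g : Fin N → Bool => downs g = n ∧ Pos k g)).card * N := by
  have hA : ∀ g : Fin N → Bool, downs g = n → A k g N = 1 := by
    intro g hg
    rw [A_total, hg]
    exact htot
  have step1 : (((univ.filter (fun g : Fin N → Bool => downs g = n)) ×ˢ range N).filter
      (fun p => Good k p.1 p.2)).card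
      = (univ.filter (fun g : Fin N → Bool => downs g = n)).card := by
    rw [Finset.card_filter, Finset.sum_product]
    have h1 : ∀ g ∈ univ.filter (fun g : Fin N → Bool => downs g = n),
        (∑ r ∈ range N, if Good k g r then (1:ℕ) else 0) = 1 := by
      intro g hg
      rw [← Finset.card_filter]
      exact card_good_eq_one (hA g (Finset.mem_filter.mp hg).2)
    rw [Finset.sum_congr rfl h1, Finset.sum_const, smul_eq_mul, mul_one]
  rw [← step1]
  have step2 : (((univ.filter (fun g : Fin N → Bool => downs g = n)) ×ˢ range N).filter
      (fun p => Good k p.1 p.2)).card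
      = ((univ.filter (fun g : Fin N → Bool => downs g = n ∧ Pos k g)) ×ˢ range N).card := by
    refine Finset.card_bij' (fun p _ => (rot p.2 p.1, p.2)) (fun p _ => (rot (N - p.2) p.1, p.2))
      ?_ ?_ ?_ ?_
    · rintro ⟨g, r⟩ hp
      simp only [Finset.mem_filter, Finset.mem_product, Finset.mem_univ, true_and,
        Finset.mem_range] at hp ⊢
      obtain ⟨⟨hgn, hrN⟩, hgood⟩ := hp
      exact ⟨⟨by rw [downs_rot]; exact hgn, pos_rot_of_good (hA g hgn) r hgood⟩, hrN⟩
    · rintro ⟨h, r⟩ hp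
      simp only [Finset.mem_filter, Finset.mem_product, Finset.mem_univ, true_and,
        Finset.mem_range] at hp ⊢
      obtain ⟨⟨hhn, hhpos⟩, hrN⟩ := hp
      have hdn : downs (rot (N - r) h) = n := by rw [downs_rot]; exact hhn
      refine ⟨⟨hdn, hrN⟩, ?_⟩
      apply good_of_pos_rot (hA _ hdn)
      rw [rot_rot, show r + (N - r) = N by omega, rot_N]
      exact hhpos
    · rintro ⟨g, r⟩ hp
      simp only [Finset.mem_filter, Finset.mem_product, Finset.mem_univ, true_and,
        Finset.mem_range] at hp
      obtain ⟨⟨hgn, hrN⟩, hgood⟩ := hp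
      simp only [Prod.mk.injEq]
      rw [rot_rot, show N - r + r = N by omega, rot_N]
      exact ⟨rfl, trivial⟩
    · rintro ⟨h, r⟩ hp
      simp only [Finset.mem_filter, Finset.mem_product, Finset.mem_univ, true_and,
        Finset.mem_range] at hp
      obtain ⟨⟨hhn, hhpos⟩, hrN⟩ := hp
      simp only [Prod.mk.injEq]
      rw [rot_rot, show r + (N - r) = N by omega, rot_N]
      exact ⟨rfl, trivial⟩
  rw [step2, Finset.card_product, Finset.card_range]

lemma card_S (n : ℕ) :
    (univ.filter (fun g : Fin N → Bool => downs g = n)).card = N.choose n := by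
  have : ((univ : Finset (Fin N)).powersetCard n).card = N.choose n := by
    rw [Finset.card_powersetCard, Finset.card_univ, Fintype.card_fin]
  rw [← this]
  refine Finset.card_bij' (fun g _ => univ.filter (fun i => g i = false))
    (fun t _ => fun i => !(decide (i ∈ t))) ?_ ?_ ?_ ?_
  · intro g hg
    rw [Finset.mem_powersetCard_univ]
    exact (Finset.mem_filter.mp hg).2
  · intro t ht
    rw [Finset.mem_powersetCard_univ] at ht
    refine Finset.mem_filter.mpr ⟨Finset.mem_univ _, ?_⟩
    unfold downs
    have hft : (univ.filter (fun i : Fin N => (!(decide (i ∈ t))) = false)) = t := by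
      ext i
      simp
    show (univ.filter (fun i : Fin N => (!(decide (i ∈ t))) = false)).card = n
    rw [hft]
    exact ht
  · intro g hg
    funext i
    simp only [Finset.mem_filter, Finset.mem_univ, true_and]
    cases h : g i <;> simp [h]
  · intro t ht
    ext i
    simp

lemma bseq_lt {g : Fin N → Bool} {i : ℕ} (h : i < N) : bseq k g i = step k (g ⟨i, h⟩) := by
  unfold bseq
  congr 2
  exact Fin.ext (Fin.val_cast_of_lt h)

omit [NeZero N] in
lemma A_cons_one (M : ℕ) (s : Fin M → Bool) : A (N := M+1) k (Fin.cons true s) 1 = 1 := by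
  rw [A, Finset.sum_range_one, bseq_lt (Nat.succ_pos M)]
  rfl

omit [NeZero N] in
lemma A_cons_fin (M : ℕ) (s : Fin M → Bool) (j : Fin M) :
    A (N := M+1) k (Fin.cons true s) (j.val + 2)
      = 1 + ∑ i ∈ univ.filter (fun i : Fin M => i ≤ j), step k (s i) := by
  have hjM : j.val + 1 ≤ M := j.isLt
  rw [A, show j.val + 2 = (j.val + 1) + 1 by ring, Finset.sum_range_succ']
  have h0 : bseq (N := M+1) k (Fin.cons true s) 0 = 1 := by
    rw [bseq_lt (Nat.succ_pos M)]
    rfl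
  rw [h0]
  have hB : ∑ i ∈ univ.filter (fun i : Fin M => i ≤ j), step k (s i)
      = ∑ i ∈ range (j.val + 1), bseq (N := M+1) k (Fin.cons true s) (i + 1) := by
    refine Finset.sum_bij' (fun (a : Fin M) _ => (a : ℕ))
      (fun (m : ℕ) hm => (⟨m, lt_of_lt_of_le (Finset.mem_range.mp hm) hjM⟩ : Fin M))
      ?_ ?_ ?_ ?_ ?_
    · intro a ha
      have : a ≤ j := (Finset.mem_filter.mp ha).2
      rw [Finset.mem_range]
      show (a : ℕ) < j.val + 1
      have := Fin.le_def.mp this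
      omega
    · intro m hm
      refine Finset.mem_filter.mpr ⟨Finset.mem_univ _, ?_⟩
      rw [Fin.le_def]
      have := Finset.mem_range.mp hm
      exact Nat.lt_succ_iff.mp this
    · intro a _
      exact Fin.eta a a.isLt
    · intro m _
      rfl
    · intro a ha
      have haM : (a : ℕ) < M := a.isLt
      show step k (s a) = bseq (N := M+1) k (Fin.cons true s) ((a : ℕ) + 1)
      rw [bseq_lt (by omega : (a : ℕ) + 1 < M + 1)]
      have : (⟨(a : ℕ) + 1, by omega⟩ : Fin (M+1)) = Fin.succ a := rfl
      rw [this, Fin.cons_succ]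
  rw [← hB]
  ring

omit [NeZero N] in
set_option maxRecDepth 4000 in
lemma downs_cons (M : ℕ) (s : Fin M → Bool) :
    downs (Fin.cons true s : Fin (M+1) → Bool) = (univ.filter (fun i => s i = false)).card := by
  unfold downs
  rw [Finset.card_filter, Finset.card_filter, Fin.sum_univ_succ]
  simp

omit [NeZero N] in
lemma pos_cons_iff (M : ℕ) (s : Fin M → Bool) :
    Pos (N := M+1) k (Fin.cons true s)
      ↔ ∀ j : Fin M, 0 ≤ ∑ i ∈ univ.filter (fun i : Fin M => i ≤ j), step k (s i) := by
  constructor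
  · intro hpos j
    have := hpos (j.val + 2) (by omega) (by omega)
    rw [A_cons_fin] at this
    linarith
  · intro hcond m h1 hm
    match m, h1 with
    | 1, _ => rw [A_cons_one]
    | (j+2), _ =>
      have hjM : j < M := by omega
      have hA2 : A (N := M+1) k (Fin.cons true s) (j + 2)
          = 1 + ∑ i ∈ univ.filter (fun i : Fin M => i ≤ ⟨j, hjM⟩), step k (s i) :=
        A_cons_fin M s ⟨j, hjM⟩
      rw [hA2]
      linarith [hcond ⟨j, hjM⟩]

lemma g0_true {M : ℕ} (hk : 2 ≤ k) {g : Fin (M+1) → Bool} (hpos : Pos (N := M+1) k g) :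
    g 0 = true := by
  have := hpos 1 le_rfl (by omega)
  rw [A, Finset.sum_range_one, bseq_lt (Nat.succ_pos M)] at this
  have h0 : (⟨0, Nat.succ_pos M⟩ : Fin (M+1)) = 0 := rfl
  rw [h0] at this
  cases hg : g 0
  · rw [hg] at this
    unfold step at this
    simp only [if_neg Bool.false_ne_true] at this
    exfalso
    have : (2:ℤ) ≤ (k:ℤ) := by exact_mod_cast hk
    omega
  · rfl

end Raney




/-- **Raney's lemma.** A lattice path with `k·n` steps is encoded by
`s : Fin (k·n) → Bool`, where `true` is an up step `(1,1)` and `false` is a down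
step `(1, 1-k)`.  The number of such paths with exactly `n` down steps (hence
`(k-1)·n` up steps) all of whose partial height sums are nonnegative (never going
below the x-axis; such a path necessarily ends at height `0`) equals the
Fuss–Catalan number `C_{n,k} = (1/(kn+1))·binom(kn+1, n)`. -/
theorem stmt4 (k n : ℕ) (hk : 2 ≤ k) :
    ((Finset.univ.filter (fun s : Fin (k * n) → Bool =>
        (Finset.univ.filter (fun i => s i = false)).card = n ∧
        ∀ j : Fin (k * n),
          0 ≤ ∑ i ∈ Finset.univ.filter (fun i : Fin (k * n) => i ≤ j),
            (if s i then (1 : ℤ) else 1 - (k : ℤ)))).card : ℚ)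
      = (Nat.choose (k * n + 1) n : ℚ) / (k * n + 1) := by
  classical
  haveI : NeZero (k * n + 1) := ⟨Nat.succ_ne_zero _⟩
  have hbridge :
      (Finset.univ.filter (fun s : Fin (k * n) → Bool =>
        (Finset.univ.filter (fun i => s i = false)).card = n ∧
        ∀ j : Fin (k * n),
          0 ≤ ∑ i ∈ Finset.univ.filter (fun i : Fin (k * n) => i ≤ j),
            (if s i then (1 : ℤ) else 1 - (k : ℤ)))).card
      = (Finset.univ.filter (fun g : Fin (k*n+1) → Bool =>
          Raney.downs g = n ∧ Raney.Pos k g)).card := by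
    refine Finset.card_bij' (fun s _ => Fin.cons true s) (fun g _ => fun i => g i.succ)
      ?_ ?_ ?_ ?_
    · intro s hs
      obtain ⟨-, hdn, hcond⟩ := Finset.mem_filter.mp hs
      refine Finset.mem_filter.mpr ⟨Finset.mem_univ _, ?_, ?_⟩
      · rw [Raney.downs_cons]
        exact hdn
      · exact (Raney.pos_cons_iff (k := k) (k*n) s).mpr hcond
    · intro g hg
      obtain ⟨-, hdn, hpos⟩ := Finset.mem_filter.mp hg
      have hg0 : g 0 = true := Raney.g0_true hk hpos
      have hge : g = Fin.cons true (fun i => g i.succ) := by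
        funext i
        refine Fin.cases ?_ ?_ i
        · rw [Fin.cons_zero]
          exact hg0
        · intro i
          rw [Fin.cons_succ]
      refine Finset.mem_filter.mpr ⟨Finset.mem_univ _, ?_, ?_⟩
      · rw [← Raney.downs_cons (k*n) (fun i => g i.succ), ← hge]
        exact hdn
      · intro j
        rw [hge] at hpos
        exact (Raney.pos_cons_iff (k := k) (k*n) (fun i => g i.succ)).mp hpos j
    · intro s _
      show (fun i : Fin (k*n) => (Fin.cons true s : Fin (k*n+1) → Bool) i.succ) = s
      funext i
      simp
    · intro g hg
      obtain ⟨-, hdn, hpos⟩ := Finset.mem_filter.mp hg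
      have hg0 : g 0 = true := Raney.g0_true hk hpos
      show Fin.cons true (fun i => g i.succ) = g
      funext i
      refine Fin.cases ?_ ?_ i
      · rw [Fin.cons_zero]
        exact hg0.symm
      · intro i
        rw [Fin.cons_succ]
  have h2 := Raney.main_count (N := k*n+1) k n (by push_cast; ring)
  have h3 := Raney.card_S (N := k*n+1) n
  have hP : ((Finset.univ.filter (fun g : Fin (k*n+1) → Bool =>
      Raney.downs g = n ∧ Raney.Pos k g)).card) * (k*n+1) = (k*n+1).choose n :=
    h2.symm.trans h3
  rw [hbridge]
  have hpos : ((k:ℚ) * n + 1) ≠ 0 := by positivity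
  field_simp
  push_cast [← hP]
  ring
end

section
/- Among all lattice paths from (0,0) to (2n,0) with n up steps (1,1) and n down steps (1,−1), for each r in {0,1,...,n} the number of paths having exactly 2r steps above the x-axis equals the Catalan number C_n = (1/(n+1))·binom(2n,n). -/
namespace CF

def w (b : Bool) : ℤ := if b then 1 else -1

def wsum (l : List Bool) : ℤ := (l.map w).sum

def h (l : List Bool) (k : ℕ) : ℤ := wsum (l.take k)

/-- number of steps above the axis -/
def pos (l : List Bool) : ℕ :=
  ∑ i ∈ Finset.range l.length, if 0 < max (h l i) (h l (i+1)) then 1 else 0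

@[simp] lemma wsum_nil : wsum [] = 0 := rfl

@[simp] lemma wsum_append (a b : List Bool) : wsum (a ++ b) = wsum a + wsum b := by
  simp [wsum]

@[simp] lemma wsum_cons (x : Bool) (l : List Bool) : wsum (x :: l) = w x + wsum l := by
  simp [wsum]

lemma h_zero (l : List Bool) : h l 0 = 0 := rfl

lemma h_of_le {l : List Bool} {k : ℕ} (hk : l.length ≤ k) : h l k = wsum l := by
  simp [h, List.take_of_length_le hk]

lemma h_succ {l : List Bool} {k : ℕ} (hk : k < l.length) :
    h l (k+1) = h l k + w (l[k]) := by
  have hk' : k < (l.map w).length := by simpa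
  have h2 := List.take_concat_get hk'
  rw [h, h, wsum, wsum, List.map_take, List.map_take, ← h2, List.concat_eq_append]
  simp

lemma h_append_left {a b : List Bool} {k : ℕ} (hk : k ≤ a.length) :
    h (a ++ b) k = h a k := by
  simp [h, List.take_append_of_le_length hk]

lemma h_append_right (a b : List Bool) (j : ℕ) :
    h (a ++ b) (a.length + j) = wsum a + h b j := by
  simp [h, List.take_append, List.take_of_length_le (Nat.le_add_right a.length j)]

lemma pos_append {a b : List Bool} (ha : wsum a = 0) :
    pos (a ++ b) = pos a + pos b := by
  rw [pos, List.length_append, Finset.sum_range_add]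
  congr 1
  · apply Finset.sum_congr rfl
    intro i hi
    rw [Finset.mem_range] at hi
    rw [h_append_left (le_of_lt hi), h_append_left hi]
  · apply Finset.sum_congr rfl
    intro i hi
    rw [Nat.add_assoc, h_append_right, h_append_right, ha, zero_add, zero_add]

/-- if all interior heights are ≥ 1 then every step is positive -/
lemma pos_eq_length {a : List Bool} (h2 : 2 ≤ a.length)
    (hin : ∀ i, 1 ≤ i → i < a.length → 1 ≤ h a i) : pos a = a.length := by
  rw [pos]
  rw [Finset.sum_congr rfl (g := fun _ => (1:ℕ))]
  · simp
  · intro i hi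
    rw [Finset.mem_range] at hi
    rw [if_pos]
    rcases Nat.eq_zero_or_pos i with h0 | h1
    · subst h0
      have := hin 1 le_rfl (by omega)
      apply lt_max_of_lt_right
      simpa using (by omega : (0:ℤ) < h a 1)
    · have := hin i h1 hi
      exact lt_max_of_lt_left (by omega)

/-- if all heights are ≤ 0 then no step is positive -/
lemma pos_eq_zero {a : List Bool} (hin : ∀ i, h a i ≤ 0) : pos a = 0 := by
  rw [pos]
  apply Finset.sum_eq_zero
  intro i _
  rw [if_neg]
  simp only [not_lt, max_le_iff]
  exact ⟨hin i, hin (i+1)⟩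


-- lists of length m
def Ls (m : ℕ) : Finset (List Bool) := (Finset.univ : Finset (Fin m → Bool)).image List.ofFn

lemma mem_Ls {m : ℕ} {l : List Bool} : l ∈ Ls m ↔ l.length = m := by
  simp only [Ls, Finset.mem_image, Finset.mem_univ, true_and]
  constructor
  · rintro ⟨s, rfl⟩; simp
  · rintro rfl
    exact ⟨fun i => l[(i : ℕ)], List.ofFn_getElem⟩

def Fs (m r : ℕ) : Finset (List Bool) := (Ls m).filter (fun l => wsum l = 0 ∧ pos l = r)

def F' (m r : ℕ) : ℕ := (Fs m r).card

open scoped Classical in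
noncomputable def N (j : ℕ) : Finset (List Bool) :=
  (Ls j).filter (fun l => wsum l = 0 ∧ ∀ i ∈ Finset.range (j+1), 0 ≤ h l i)

noncomputable def d (j : ℕ) : ℕ := (N j).card

lemma mem_N {j : ℕ} {l : List Bool} :
    l ∈ N j ↔ l.length = j ∧ wsum l = 0 ∧ ∀ i, 0 ≤ h l i := by
  simp only [N, Finset.mem_filter, mem_Ls, Finset.mem_range]
  constructor
  · rintro ⟨rfl, hw, hi⟩
    refine ⟨rfl, hw, fun i => ?_⟩
    rcases le_or_gt i l.length with hle | hlt
    · exact hi i (by omega)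
    · rw [h_of_le (le_of_lt hlt), hw]
  · rintro ⟨rfl, hw, hi⟩
    exact ⟨rfl, hw, fun i _ => hi i⟩

lemma wsum_add_length (l : List Bool) : wsum l + l.length = 2 * (l.count true : ℤ) := by
  induction l with
  | nil => simp [wsum]
  | cons x t ih =>
    rcases x with _ | _ <;>
      simp_all [wsum, w, List.count_cons] <;> push_cast <;> ring_nf <;> omega

lemma even_length_of_bal {l : List Bool} (hw : wsum l = 0) : Even l.length := by
  have := wsum_add_length l
  rw [hw, zero_add] at this
  have : Even (l.length : ℤ) := ⟨l.count true, by omega⟩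
  exact Int.even_coe_nat l.length |>.mp this

lemma d_odd {j : ℕ} (hj : ¬ Even j) : d j = 0 := by
  rw [d, Finset.card_eq_zero, Finset.eq_empty_iff_forall_notMem]
  intro l hl
  rw [mem_N] at hl
  exact hj (hl.1 ▸ even_length_of_bal hl.2.1)

lemma pos_le_length (l : List Bool) : pos l ≤ l.length := by
  calc pos l ≤ ∑ _i ∈ Finset.range l.length, 1 := by
        apply Finset.sum_le_sum; intro i _; split <;> omega
    _ = l.length := by simp

lemma F'_eq_zero {m r : ℕ} (hr : m < r) : F' m r = 0 := by
  rw [F', Finset.card_eq_zero, Finset.eq_empty_iff_forall_notMem]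
  intro l hl
  rw [Fs, Finset.mem_filter, mem_Ls] at hl
  have := pos_le_length l
  omega



lemma flip_flip (l : List Bool) : (l.map not).map not = l := by
  simp [List.map_map, Function.comp_def]

lemma wsum_flip (l : List Bool) : wsum (l.map not) = - wsum l := by
  induction l with
  | nil => simp [wsum]
  | cons x t ih =>
    rcases x with _ | _ <;> simp_all [wsum, w] <;> ring

lemma h_flip (l : List Bool) (k : ℕ) : h (l.map not) k = - h l k := by
  rw [h, h, ← List.map_take, wsum_flip]

lemma length_flip (l : List Bool) : (l.map not).length = l.length := by simp

lemma pos_eq_zero_iff {l : List Bool} (hw : wsum l = 0) :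
    pos l = 0 ↔ ∀ i, h l i ≤ 0 := by
  constructor
  · intro hp i
    by_contra hc
    push_neg at hc
    have hex : ∃ k, 0 < h l k := ⟨i, hc⟩
    have hk := Nat.find_spec hex
    set k := Nat.find hex with hkdef
    have hk0 : k ≠ 0 := by
      intro h0; rw [h0, h_zero] at hk; omega
    have hklen : k ≤ l.length := by
      by_contra hgt
      push_neg at hgt
      rw [h_of_le (le_of_lt hgt), hw] at hk; omega
    have hmem : k - 1 ∈ Finset.range l.length := Finset.mem_range.mpr (by omega)
    have := Finset.sum_eq_zero_iff.mp hp (k-1) hmem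
    have hsucc : k - 1 + 1 = k := by omega
    rw [hsucc] at this
    have : ¬ (0 < max (h l (k-1)) (h l k)) := by
      by_contra hcc; rw [if_pos hcc] at this; omega
    exact this (lt_max_of_lt_right hk)
  · exact fun hin => pos_eq_zero hin

lemma F'_zero_eq_d (m : ℕ) : F' m 0 = d m := by
  rw [F', d]
  refine Finset.card_nbij' (fun l => l.map not) (fun M => M.map not) ?_ ?_ ?_ ?_
  · intro l hl
    rw [Finset.mem_coe, Fs, Finset.mem_filter, mem_Ls] at hl
    obtain ⟨hlen, hw, hp⟩ := hl
    rw [Finset.mem_coe, mem_N]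
    refine ⟨by simp [hlen], by rw [wsum_flip, hw, neg_zero], fun i => ?_⟩
    rw [h_flip]
    have := (pos_eq_zero_iff hw).mp hp i
    omega
  · intro M hM
    rw [Finset.mem_coe, mem_N] at hM
    obtain ⟨hlen, hw, hnn⟩ := hM
    rw [Finset.mem_coe, Fs, Finset.mem_filter, mem_Ls]
    have hw' : wsum (M.map not) = 0 := by rw [wsum_flip, hw, neg_zero]
    refine ⟨by simp [hlen], hw', pos_eq_zero fun i => ?_⟩
    rw [h_flip]
    have := hnn i
    omega
  · intro l _; exact flip_flip l
  · intro M _; exact flip_flip M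


-- real content below

lemma h_cons (x : Bool) (t : List Bool) (i : ℕ) : h (x :: t) (i+1) = w x + h t i := by
  rw [h, h, List.take_succ_cons, wsum_cons]

lemma w_one_or (b : Bool) : w b = 1 ∨ w b = -1 := by
  rcases b with _ | _ <;> simp [w]

def pArch (M : List Bool) : List Bool := true :: (M ++ [false])
def nArch (M : List Bool) : List Bool := false :: (M.map not ++ [true])

def isArch (a : List Bool) : Prop :=
  1 ≤ a.length ∧ wsum a = 0 ∧ ∀ i, 1 ≤ i → i < a.length → h a i ≠ 0

-- given: M has length j, bal, nonneg
section arch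
variable {M : List Bool} (hw : wsum M = 0) (hnn : ∀ i, 0 ≤ h M i)

lemma pArch_length (M : List Bool) : (pArch M).length = M.length + 2 := by
  simp [pArch]

lemma nArch_length (M : List Bool) : (nArch M).length = M.length + 2 := by
  simp [nArch]

include hw in
lemma pArch_wsum : wsum (pArch M) = 0 := by
  rw [pArch, wsum_cons, wsum_append, hw, wsum_cons]
  simp [w, wsum]

include hw in
lemma nArch_wsum : wsum (nArch M) = 0 := by
  rw [nArch, wsum_cons, wsum_append, wsum_flip, hw, wsum_cons]
  simp [w, wsum]

include hw hnn in
lemma pArch_h {i : ℕ} (h1 : 1 ≤ i) (h2 : i < M.length + 2) : 1 ≤ h (pArch M) i := by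
  obtain ⟨i, rfl⟩ : ∃ i', i = i' + 1 := ⟨i - 1, by omega⟩
  rw [pArch, h_cons]
  have hi : i ≤ M.length := by omega
  rw [h_append_left hi]
  have := hnn i
  simp [w]
  omega

include hw hnn in
lemma nArch_h (i : ℕ) : h (nArch M) i ≤ 0 := by
  rcases Nat.eq_zero_or_pos i with rfl | h1
  · rw [h_zero]
  rcases le_or_gt (M.length + 2) i with hge | hlt
  · rw [h_of_le (by simpa [nArch_length] using hge), nArch_wsum hw]
  obtain ⟨i, rfl⟩ : ∃ i', i = i' + 1 := ⟨i - 1, by omega⟩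
  rw [nArch, h_cons]
  have hi : i ≤ (M.map not).length := by simp; omega
  rw [h_append_left hi, h_flip]
  have := hnn i
  simp [w]
  omega

include hw hnn in
lemma pArch_pos : pos (pArch M) = M.length + 2 := by
  rw [← pArch_length M]
  exact pos_eq_length (by rw [pArch_length]; omega)
    (fun i hi1 hi2 => pArch_h hw hnn hi1 (by rwa [pArch_length] at hi2))

include hw hnn in
lemma nArch_pos : pos (nArch M) = 0 := pos_eq_zero (nArch_h hw hnn)

include hw hnn in
lemma pArch_isArch : isArch (pArch M) := by
  refine ⟨by rw [pArch_length]; omega, pArch_wsum hw, fun i hi1 hi2 => ?_⟩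
  have := pArch_h hw hnn hi1 (by rwa [pArch_length] at hi2)
  omega

include hw hnn in
lemma nArch_isArch : isArch (nArch M) := by
  refine ⟨by rw [nArch_length]; omega, nArch_wsum hw, fun i hi1 hi2 => ?_⟩
  rw [nArch_length] at hi2
  obtain ⟨i, rfl⟩ : ∃ i', i = i' + 1 := ⟨i - 1, by omega⟩
  rw [nArch, h_cons]
  have hi : i ≤ (M.map not).length := by simp; omega
  rw [h_append_left hi, h_flip]
  have := hnn i
  simp [w]
  omega

end arch

lemma arch_prefix_eq_aux {a a' B B' : List Bool} (ha : isArch a) (ha' : isArch a')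
    (he : a ++ B = a' ++ B') (hlen : a.length ≤ a'.length) : a = a' := by
  obtain ⟨h1, hw, hint⟩ := ha
  obtain ⟨h1', hw', hint'⟩ := ha'
  have hta : a = List.take a.length (a' ++ B') := by rw [← he, List.take_left]
  rw [List.take_append_of_le_length hlen] at hta
  have hha : h a' a.length = 0 := by
    rw [h, ← hta, hw]
  have : ¬ a.length < a'.length := fun hc => hint' a.length h1 hc hha
  have : a.length = a'.length := by omega
  rw [hta, this, List.take_of_length_le le_rfl]

lemma arch_prefix_eq {a a' B B' : List Bool} (ha : isArch a) (ha' : isArch a')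
    (he : a ++ B = a' ++ B') : a = a' ∧ B = B' := by
  have hac : a = a' := by
    rcases le_total a.length a'.length with hle | hle
    · exact arch_prefix_eq_aux ha ha' he hle
    · exact (arch_prefix_eq_aux ha' ha he.symm hle).symm
  subst hac
  exact ⟨rfl, List.append_cancel_left he⟩

lemma h_step_up (l : List Bool) {i : ℕ} (hi : i < l.length) :
    h l i - 1 ≤ h l (i+1) ∧ h l (i+1) ≤ h l i + 1 := by
  rw [h_succ hi]
  rcases w_one_or (l[i]) with hh | hh <;> rw [hh] <;> omega

/-- structure of an arch -/
lemma arch_shape {a : List Bool} (ha : isArch a) :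
    ∃ M, M.length = a.length - 2 ∧ wsum M = 0 ∧ (∀ i, 0 ≤ h M i) ∧
      (a = pArch M ∨ a = nArch M) := by
  obtain ⟨h1, hw, hint⟩ := ha
  have hev := even_length_of_bal hw
  have h2 : 2 ≤ a.length := by
    rcases hev with ⟨c, hc⟩; omega
  rcases a with _ | ⟨x, t⟩
  · simp at h1
  have htne : t ≠ [] := by
    intro hh; rw [hh] at h2; simp at h2
  set M' := t.dropLast with hM'
  set y := t.getLast htne with hy
  have hts : t = M' ++ [y] := (List.dropLast_append_getLast htne).symm
  have hlenM' : M'.length = t.length - 1 := by rw [hM', List.length_dropLast]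
  have ht1 : 1 ≤ t.length := List.length_pos_iff.mpr htne
  have hlen : (x :: t).length = M'.length + 2 := by
    simp only [List.length_cons, hlenM']; omega
  -- heights of prefix inside M'
  have hstep : ∀ i, i ≤ M'.length → h (x :: t) (i+1) = w x + h M' i := by
    intro i hi
    rw [h_cons, hts, h_append_left hi]
  have hwsum : w x + wsum M' + w y = 0 := by
    have hww : w x + (wsum M' + wsum [y]) = 0 := by
      rw [← wsum_append, ← hts, ← wsum_cons, hw]
    have hwy : wsum [y] = w y := by simp [wsum]
    rw [hwy] at hww
    linarith
  -- interior nonzero rephrased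
  have hint' : ∀ i, i < M'.length + 1 → w x + h M' i ≠ 0 := by
    intro i hi
    rcases Nat.eq_zero_or_pos i with rfl | hip
    · rw [h_zero]; rcases w_one_or x with hh | hh <;> rw [hh] <;> omega
    · have := hint (i+1) (by omega) (by omega)
      rw [hstep i (by omega)] at this
      exact this
  rcases x with _ | _
  · -- x = false, w x = -1
    have hwx : w false = -1 := rfl
    -- all prefix sums of M' are ≤ 0
    have hnp : ∀ i, i ≤ M'.length → h M' i ≤ 0 := by
      intro i
      induction i with
      | zero => intro _; rw [h_zero]
      | succ i ih =>
        intro hi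
        have hprev := ih (by omega)
        have hs := h_step_up M' (i := i) (by omega)
        have hnz := hint' (i+1) (by omega)
        rw [hwx] at hnz
        omega
    have hwM' : wsum M' = 0 ∧ w y = 1 := by
      have := hnp M'.length le_rfl
      rw [h_of_le le_rfl] at this
      rcases w_one_or y with hh | hh <;> rw [hwx] at hwsum <;> omega
    have hyt : y = true := by
      rcases hwM' with ⟨_, hh⟩; rcases y with _ | _ <;> simp [w] at hh ⊢
    refine ⟨M'.map not, by rw [List.length_map]; omega, by rw [wsum_flip, hwM'.1, neg_zero],
      fun i => ?_, Or.inr ?_⟩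
    · rw [h_flip]
      rcases le_or_gt i M'.length with hc | hc
      · have := hnp i hc; omega
      · rw [h_of_le (by omega), hwM'.1]; simp
    · rw [nArch, flip_flip, ← hyt, ← hts]
  · -- x = true
    have hwx : w true = 1 := rfl
    have hnp : ∀ i, i ≤ M'.length → 0 ≤ h M' i := by
      intro i
      induction i with
      | zero => intro _; rw [h_zero]
      | succ i ih =>
        intro hi
        have hprev := ih (by omega)
        have hs := h_step_up M' (i := i) (by omega)
        have hnz := hint' (i+1) (by omega)
        rw [hwx] at hnz
        omega
    have hwM' : wsum M' = 0 ∧ w y = -1 := by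
      have := hnp M'.length le_rfl
      rw [h_of_le le_rfl] at this
      rcases w_one_or y with hh | hh <;> rw [hwx] at hwsum <;> omega
    have hyt : y = false := by
      rcases hwM' with ⟨_, hh⟩; rcases y with _ | _ <;> simp [w] at hh ⊢
    refine ⟨M', by omega, hwM'.1, fun i => ?_, Or.inl ?_⟩
    · rcases le_or_gt i M'.length with hc | hc
      · exact hnp i hc
      · rw [h_of_le (by omega), hwM'.1]
    · rw [pArch, ← hyt, ← hts]

/-- first-return decomposition -/
lemma decomp {l : List Bool} (hne : l.length ≠ 0) (hw : wsum l = 0) :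
    ∃ a B, isArch a ∧ wsum B = 0 ∧ l = a ++ B := by
  have hex : ∃ k, 1 ≤ k ∧ h l k = 0 := ⟨l.length, by omega, by rw [h_of_le le_rfl, hw]⟩
  classical
  set k := Nat.find hex with hkdef
  obtain ⟨hk1, hk0⟩ := Nat.find_spec hex
  have hkle : k ≤ l.length := Nat.find_min' hex ⟨by omega, by rw [h_of_le le_rfl, hw]⟩
  refine ⟨l.take k, l.drop k, ⟨?_, ?_, ?_⟩, ?_, (List.take_append_drop k l).symm⟩
  · rw [List.length_take]; omega
  · show wsum (l.take k) = 0
    exact hk0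
  · intro i hi1 hi2
    rw [List.length_take] at hi2
    have hik : i < k := lt_of_lt_of_le hi2 (min_le_left _ _)
    have : h (l.take k) i = h l i := by
      rw [h, h, List.take_take, min_eq_left (le_of_lt hik)]
    rw [this]
    intro hc
    exact Nat.find_min hex hik ⟨hi1, hc⟩
  · have hsplit := wsum_append (l.take k) (l.drop k)
    rw [List.take_append_drop, hw] at hsplit
    have h2 : wsum (l.take k) = 0 := hk0
    linarith [hsplit.symm, h2]


def arch (x : Bool) (M : List Bool) : List Bool := if x then pArch M else nArch M

lemma arch_inj {x1 x2 : Bool} {M1 M2 : List Bool} (he : arch x1 M1 = arch x2 M2) :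
    x1 = x2 ∧ M1 = M2 := by
  rcases x1 with _ | _ <;> rcases x2 with _ | _ <;>
    simp only [arch, if_true, if_false, pArch, nArch] at he <;>
    simp_all
  · exact flip_flip M1 ▸ flip_flip M2 ▸ (by rw [he] : (M1.map not).map not = (M2.map not).map not)

lemma arch_length {x : Bool} (M : List Bool) : (arch x M).length = M.length + 2 := by
  rcases x with _ | _
  · exact nArch_length M
  · exact pArch_length M

lemma arch_wsum {x : Bool} {M : List Bool} (hw : wsum M = 0) : wsum (arch x M) = 0 := by
  rcases x with _ | _
  · exact nArch_wsum hw
  · exact pArch_wsum hw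

lemma arch_isArch {x : Bool} {M : List Bool} (hw : wsum M = 0) (hnn : ∀ i, 0 ≤ h M i) :
    isArch (arch x M) := by
  rcases x with _ | _
  · exact nArch_isArch hw hnn
  · exact pArch_isArch hw hnn

open scoped Classical in
theorem F'_rec (m r : ℕ) (hm : 1 ≤ m) :
    F' m r = ∑ j ∈ Finset.range (m-1),
      d j * ((if j+2 ≤ r then F' (m-2-j) (r-2-j) else 0) + F' (m-2-j) r) := by
  classical
  have hbU : Fs m r = ((Finset.range (m-1)).sigma (fun j => (N j) ×ˢ (Finset.univ : Finset Bool))).biUnion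
      (fun p => ((Ls (m-2-p.1)).filter
        (fun B => wsum B = 0 ∧ pos (arch p.2.2 p.2.1 ++ B) = r)).image (arch p.2.2 p.2.1 ++ ·)) := by
    ext l
    simp only [Finset.mem_biUnion, Finset.mem_sigma, Finset.mem_range, Finset.mem_product,
      Finset.mem_univ, and_true, Finset.mem_image, Finset.mem_filter, Fs, mem_Ls]
    constructor
    · rintro ⟨hlen, hw, hpos⟩
      have hne : l.length ≠ 0 := by omega
      have hm2 : 2 ≤ m := by
        rcases even_length_of_bal hw with ⟨c, hc⟩
        omega
      obtain ⟨a, B, haA, hwB, rfl⟩ := decomp hne hw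
      obtain ⟨M, hMlen, hMw, hMnn, hshape⟩ := arch_shape haA
      have ha1 : 1 ≤ a.length := haA.1
      have haev : Even a.length := even_length_of_bal haA.2.1
      have ha2 : 2 ≤ a.length := by rcases haev with ⟨c, hc⟩; omega
      have hlenab : a.length + B.length = m := by
        rw [← hlen, List.length_append]
      have hMN : M ∈ N M.length := mem_N.mpr ⟨rfl, hMw, hMnn⟩
      have hMl2 : M.length = a.length - 2 := hMlen
      rcases hshape with hsh | hsh
      · refine ⟨⟨M.length, M, true⟩, ⟨by dsimp only; omega, hMN⟩, B, ⟨⟨?_, hwB, ?_⟩, ?_⟩⟩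
        · dsimp only; omega
        · show pos (arch true M ++ B) = r
          rw [show arch true M = a from by rw [arch, if_pos rfl, ← hsh], hpos]
        · show arch true M ++ B = a ++ B
          rw [arch, if_pos rfl, ← hsh]
      · refine ⟨⟨M.length, M, false⟩, ⟨by dsimp only; omega, hMN⟩, B, ⟨⟨?_, hwB, ?_⟩, ?_⟩⟩
        · dsimp only; omega
        · show pos (arch false M ++ B) = r
          rw [show arch false M = a from by rw [arch, if_neg (by simp), ← hsh], hpos]
        · show arch false M ++ B = a ++ B
          rw [arch, if_neg (by simp), ← hsh]
    · rintro ⟨⟨j, M, x⟩, ⟨hj, hM⟩, B, ⟨hBlen, hwB, hpos⟩, rfl⟩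
      obtain ⟨hMlen, hMw, hMnn⟩ := mem_N.mp hM
      refine ⟨?_, ?_, hpos⟩
      · rw [List.length_append, arch_length, hMlen, hBlen]
        omega
      · rw [wsum_append, arch_wsum hMw, hwB, add_zero]
  have hdisj : ∀ p1 ∈ (Finset.range (m-1)).sigma (fun j => (N j) ×ˢ (Finset.univ : Finset Bool)),
      ∀ p2 ∈ (Finset.range (m-1)).sigma (fun j => (N j) ×ˢ (Finset.univ : Finset Bool)),
      p1 ≠ p2 →
      Disjoint (((Ls (m-2-p1.1)).filter
        (fun B => wsum B = 0 ∧ pos (arch p1.2.2 p1.2.1 ++ B) = r)).image (arch p1.2.2 p1.2.1 ++ ·))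
        (((Ls (m-2-p2.1)).filter
        (fun B => wsum B = 0 ∧ pos (arch p2.2.2 p2.2.1 ++ B) = r)).image (arch p2.2.2 p2.2.1 ++ ·)) := by
    rintro ⟨j1, M1, x1⟩ hp1 ⟨j2, M2, x2⟩ hp2 hne
    simp only [Finset.mem_sigma, Finset.mem_range, Finset.mem_product, Finset.mem_univ,
      and_true] at hp1 hp2
    obtain ⟨hM1len, hM1w, hM1nn⟩ := mem_N.mp hp1.2
    obtain ⟨hM2len, hM2w, hM2nn⟩ := mem_N.mp hp2.2
    rw [Finset.disjoint_left]
    rintro l hl1 hl2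
    simp only [Finset.mem_image, Finset.mem_filter] at hl1 hl2
    obtain ⟨B1, hB1, hlB1⟩ := hl1
    obtain ⟨B2, hB2, hlB2⟩ := hl2
    have heq : arch x1 M1 ++ B1 = arch x2 M2 ++ B2 := by rw [hlB1, hlB2]
    have := arch_prefix_eq (arch_isArch hM1w hM1nn) (arch_isArch hM2w hM2nn) heq
    obtain ⟨hxM, _⟩ := arch_inj this.1
    apply hne
    subst hxM
    obtain ⟨_, hMM⟩ := arch_inj this.1
    subst hMM
    rw [show j1 = M1.length from hM1len.symm, show j2 = M1.length from hM2len.symm]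
  rw [F', hbU, Finset.card_biUnion hdisj, Finset.sum_sigma]
  apply Finset.sum_congr rfl
  intro j hj
  rw [Finset.sum_product]
  have hcard : ∀ (M : List Bool), M ∈ N j → ∀ x : Bool,
      (((Ls (m-2-j)).filter (fun B => wsum B = 0 ∧ pos (arch x M ++ B) = r)).image
        (arch x M ++ ·)).card
      = ((Ls (m-2-j)).filter (fun B => wsum B = 0 ∧ pos (arch x M ++ B) = r)).card := by
    intro M _ x
    exact Finset.card_image_of_injective _ (List.append_right_injective _)
  calc ∑ M ∈ N j, ∑ x : Bool,
        (((Ls (m-2-j)).filter (fun B => wsum B = 0 ∧ pos (arch x M ++ B) = r)).image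
          (arch x M ++ ·)).card
      = ∑ M ∈ N j, ((if j+2 ≤ r then F' (m-2-j) (r-2-j) else 0) + F' (m-2-j) r) := by
        apply Finset.sum_congr rfl
        intro M hM
        obtain ⟨hMlen, hMw, hMnn⟩ := mem_N.mp hM
        rw [Fintype.sum_bool, hcard M hM true, hcard M hM false]
        congr 1
        · -- positive arch count
          have hps : ∀ B, pos (arch true M ++ B) = (j+2) + pos B := by
            intro B
            rw [show arch true M = pArch M from rfl, pos_append (pArch_wsum hMw),
              pArch_pos hMw hMnn, hMlen]
          split
          case isTrue hle =>
            rw [F', Fs]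
            congr 1
            apply Finset.filter_congr
            intro B _
            simp only [hps B]
            constructor
            · rintro ⟨h1, h2⟩; exact ⟨h1, by omega⟩
            · rintro ⟨h1, h2⟩; exact ⟨h1, by omega⟩
          case isFalse hgt =>
            rw [Finset.card_eq_zero, Finset.eq_empty_iff_forall_notMem]
            intro B hB
            rw [Finset.mem_filter] at hB
            have := hB.2.2
            rw [hps B] at this
            omega
        · -- negative arch count
          have hps : ∀ B, pos (arch false M ++ B) = pos B := by
            intro B
            rw [show arch false M = nArch M from rfl, pos_append (nArch_wsum hMw),
              nArch_pos hMw hMnn, zero_add]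
          rw [F', Fs]
          congr 1
          apply Finset.filter_congr
          intro B _
          simp only [hps B]
    _ = d j * ((if j+2 ≤ r then F' (m-2-j) (r-2-j) else 0) + F' (m-2-j) r) := by
        rw [Finset.sum_const, d, smul_eq_mul]

lemma pos_nil : pos [] = 0 := by simp [pos]

lemma pos_even_aux : ∀ (n : ℕ) (l : List Bool), l.length = n → wsum l = 0 → Even (pos l) := by
  intro n
  induction n using Nat.strong_induction_on with
  | _ n ih =>
    intro l hlen hw
    rcases Nat.eq_zero_or_pos n with rfl | hp
    · rw [List.length_eq_zero_iff.mp hlen, pos_nil]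
      exact Even.zero
    · obtain ⟨a, B, haA, hwB, rfl⟩ := decomp (by omega) hw
      rw [pos_append haA.2.1]
      have ha1 : 1 ≤ a.length := haA.1
      have hBlen : B.length < n := by
        rw [← hlen, List.length_append]; omega
      have hB : Even (pos B) := ih B.length hBlen B rfl hwB
      obtain ⟨M, hMlen, hMw, hMnn, hshape⟩ := arch_shape haA
      have hMev : Even M.length := even_length_of_bal hMw
      rcases hshape with hsh | hsh
      · rw [hsh, pArch_pos hMw hMnn]
        rcases hMev with ⟨c, hc⟩
        rcases hB with ⟨e, he⟩
        exact ⟨c + 1 + e, by omega⟩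
      · rw [hsh, nArch_pos hMw hMnn, Nat.zero_add]
        exact hB

lemma pos_even {l : List Bool} (hw : wsum l = 0) : Even (pos l) :=
  pos_even_aux l.length l rfl hw

lemma d_eq_zero_of_odd {j : ℕ} (hj : ¬ Even j) : d j = 0 := d_odd hj

/-- Chung-Feller equidistribution -/
theorem F'_indep : ∀ n, ∀ r ≤ n, F' (2*n) (2*r) = F' (2*n) 0 := by
  intro n
  induction n using Nat.strong_induction_on with
  | _ n ih =>
    intro r hr
    rcases Nat.eq_zero_or_pos n with rfl | hn
    · have : r = 0 := by omega
      subst this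
      rfl
    rcases Nat.eq_zero_or_pos r with rfl | hrp
    · rfl
    have hm : 1 ≤ 2*n := by omega
    have key : ∀ r', r' ≤ n →
        (∑ j ∈ Finset.range (2*n-1),
          d j * ((if j+2 ≤ 2*r' then F' (2*n-2-j) (2*r'-2-j) else 0) + F' (2*n-2-j) (2*r')))
        = ∑ j ∈ Finset.range (2*n-1), d j * d (2*n-2-j) := by
      intro r' hr'
      have step1 : ∀ j ∈ Finset.range (2*n-1),
          d j * ((if j+2 ≤ 2*r' then F' (2*n-2-j) (2*r'-2-j) else 0) + F' (2*n-2-j) (2*r'))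
          = (if j+2 ≤ 2*r' then d j * d (2*n-2-j) else 0)
            + (if 2*r' ≤ 2*n-2-j then d j * d (2*n-2-j) else 0) := by
        intro j hj
        rw [Finset.mem_range] at hj
        by_cases hev : Even j
        case neg =>
          rw [d_eq_zero_of_odd hev]
          simp
        obtain ⟨t, ht⟩ := hev
        have hjt : j = 2*t := by omega
        have htn : t < n := by omega
        have e1 : 2*n-2-j = 2*(n-1-t) := by omega
        -- first term
        have hterm1 : (if j+2 ≤ 2*r' then F' (2*n-2-j) (2*r'-2-j) else 0)
            = (if j+2 ≤ 2*r' then d (2*n-2-j) else 0) := by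
          split
          case isTrue hle =>
            have e2 : 2*r'-2-j = 2*(r'-1-t) := by omega
            rw [e1, e2, ih (n-1-t) (by omega) (r'-1-t) (by omega), F'_zero_eq_d, ← e1]
          case isFalse => rfl
        have hterm2 : F' (2*n-2-j) (2*r')
            = (if 2*r' ≤ 2*n-2-j then d (2*n-2-j) else 0) := by
          split
          case isTrue hle =>
            rw [e1, show 2*r' = 2*r' from rfl, ih (n-1-t) (by omega) r' (by omega),
              F'_zero_eq_d, ← e1]
          case isFalse hgt =>
            exact F'_eq_zero (by omega)
        rw [hterm1, hterm2, Nat.mul_add]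
        congr 1
        · split <;> simp [Nat.mul_comm]
        · split <;> simp [Nat.mul_comm]
      rw [Finset.sum_congr rfl step1, Finset.sum_add_distrib]
      have refl2 : (∑ j ∈ Finset.range (2*n-1), if 2*r' ≤ 2*n-2-j then d j * d (2*n-2-j) else 0)
          = ∑ j ∈ Finset.range (2*n-1), if 2*r' ≤ j then d j * d (2*n-2-j) else 0 := by
        apply Finset.sum_nbij' (fun j => 2*n-2-j) (fun j => 2*n-2-j)
        · intro a ha; rw [Finset.mem_range] at *; omega
        · intro a ha; rw [Finset.mem_range] at *; omega
        · intro a ha; rw [Finset.mem_range] at ha; omega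
        · intro a ha; rw [Finset.mem_range] at ha; omega
        · intro a ha
          rw [Finset.mem_range] at ha
          have e3 : 2*n-2-(2*n-2-a) = a := by omega
          rw [e3, Nat.mul_comm (d a)]
      rw [refl2, ← Finset.sum_add_distrib]
      apply Finset.sum_congr rfl
      intro j hj
      rw [Finset.mem_range] at hj
      by_cases h1 : j+2 ≤ 2*r'
      · by_cases h2 : 2*r' ≤ j
        · omega
        · rw [if_pos h1, if_neg h2, Nat.add_zero]
      · by_cases h2 : 2*r' ≤ j
        · rw [if_neg h1, if_pos h2, Nat.zero_add]
        · have hodd : ¬ Even j := by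
            intro ⟨c, hc⟩
            omega
          rw [if_neg h1, if_neg h2, d_eq_zero_of_odd hodd, Nat.zero_mul, Nat.add_zero]
    have k0 := key 0 (Nat.zero_le n)
    simp only [Nat.mul_zero] at k0
    rw [F'_rec _ _ hm, F'_rec _ _ hm, key r hr, ← k0]

theorem sum_F' (n : ℕ) :
    ∑ r ∈ Finset.range (n+1), F' (2*n) (2*r)
      = ((Ls (2*n)).filter (fun l => wsum l = 0)).card := by
  classical
  have hU : (Ls (2*n)).filter (fun l => wsum l = 0)
      = (Finset.range (n+1)).biUnion (fun r => Fs (2*n) (2*r)) := by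
    ext l
    simp only [Finset.mem_biUnion, Finset.mem_range, Finset.mem_filter, Fs, mem_Ls]
    constructor
    · rintro ⟨hlen, hw⟩
      obtain ⟨c, hc⟩ := pos_even hw
      have hle := pos_le_length l
      exact ⟨c, by omega, hlen, hw, by omega⟩
    · rintro ⟨r', _, hmem⟩
      exact ⟨hmem.1, hmem.2.1⟩
  have hdisj : ∀ r1 ∈ Finset.range (n+1), ∀ r2 ∈ Finset.range (n+1), r1 ≠ r2 →
      Disjoint (Fs (2*n) (2*r1)) (Fs (2*n) (2*r2)) := by
    intro r1 _ r2 _ hne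
    rw [Finset.disjoint_left]
    intro l hl1 hl2
    rw [Fs, Finset.mem_filter] at hl1 hl2
    have e1 := hl1.2.2
    have e2 := hl2.2.2
    exact hne (by omega)
  rw [hU, Finset.card_biUnion hdisj]
  rfl

lemma card_filter_Ls (m : ℕ) (P : List Bool → Prop) [DecidablePred P] :
    ((Ls m).filter P).card
      = (Finset.univ.filter (fun s : Fin m → Bool => P (List.ofFn s))).card := by
  classical
  rw [Ls, Finset.filter_image, Finset.card_image_of_injective _ List.ofFn_injective]

lemma wsum_ofFn {m : ℕ} (s : Fin m → Bool) :
    wsum (List.ofFn s) = ∑ i : Fin m, w (s i) := by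
  rw [wsum, List.map_ofFn, List.sum_ofFn]
  rfl

lemma bal_iff_card {n : ℕ} (s : Fin (2*n) → Bool) :
    wsum (List.ofFn s) = 0 ↔ (Finset.univ.filter (fun i => s i = true)).card = n := by
  classical
  rw [wsum_ofFn]
  have hsplit := Finset.sum_filter_add_sum_filter_not Finset.univ
    (fun i => s i = true) (fun i => w (s i))
  have h1 : ∑ i ∈ Finset.univ.filter (fun i => s i = true), w (s i)
      = ((Finset.univ.filter (fun i => s i = true)).card : ℤ) := by
    rw [Finset.sum_congr rfl (g := fun _ => (1:ℤ)) (fun i hi => by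
      rw [Finset.mem_filter] at hi
      simp [w, hi.2]), Finset.sum_const, nsmul_eq_mul, mul_one]
  have h2 : ∑ i ∈ Finset.univ.filter (fun i => ¬ s i = true), w (s i)
      = -((Finset.univ.filter (fun i => ¬ s i = true)).card : ℤ) := by
    rw [Finset.sum_congr rfl (g := fun _ => (-1:ℤ)) (fun i hi => by
      rw [Finset.mem_filter] at hi
      simp only [Bool.not_eq_true] at hi
      simp [w, hi.2]), Finset.sum_const, nsmul_eq_mul, mul_neg_one]
  have hcards := Finset.card_filter_add_card_filter_not
    (s := (Finset.univ : Finset (Fin (2*n)))) (fun i => s i = true)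
  rw [Finset.card_univ, Fintype.card_fin] at hcards
  rw [h1, h2] at hsplit
  constructor
  · intro h0
    rw [h0] at hsplit
    omega
  · intro hc
    rw [← hsplit, hc]
    omega

lemma h_ofFn {m : ℕ} (s : Fin m → Bool) :
    ∀ k, k ≤ m → h (List.ofFn s) k
      = ∑ l ∈ Finset.univ.filter (fun l : Fin m => (l : ℕ) < k), w (s l) := by
  intro k
  induction k with
  | zero =>
    intro _
    rw [h_zero]
    symm
    rw [Finset.sum_eq_zero_iff_of_nonneg]
    · intro i hi
      rw [Finset.mem_filter] at hi
      omega
    · intro i hi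
      rw [Finset.mem_filter] at hi
      omega
  | succ k ihk =>
    intro hk1
    have hk : k < m := hk1
    have hlen : k < (List.ofFn s).length := by simp [hk]
    rw [h_succ hlen, ihk (by omega)]
    have hget : (List.ofFn s)[k] = s ⟨k, hk⟩ := List.getElem_ofFn hlen
    rw [hget]
    have hset : Finset.univ.filter (fun l : Fin m => (l:ℕ) < k+1)
        = insert (⟨k, hk⟩ : Fin m) (Finset.univ.filter (fun l : Fin m => (l:ℕ) < k)) := by
      ext x
      simp only [Finset.mem_filter, Finset.mem_univ, true_and, Finset.mem_insert, Fin.ext_iff]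
      omega
    rw [hset, Finset.sum_insert (by simp)]
    ring

lemma pos_ofFn {m : ℕ} (s : Fin m → Bool) :
    pos (List.ofFn s)
      = (Finset.univ.filter (fun i : Fin m =>
          0 < max
            (∑ l ∈ Finset.univ.filter (fun l : Fin m => l < i), (if s l then (1:ℤ) else -1))
            (∑ l ∈ Finset.univ.filter (fun l : Fin m => l ≤ i), (if s l then (1:ℤ) else -1)))).card := by
  classical
  rw [Finset.card_filter, pos]
  have hlen : (List.ofFn s).length = m := by simp
  rw [hlen, ← Fin.sum_univ_eq_sum_range (fun i =>
    if 0 < max (h (List.ofFn s) i) (h (List.ofFn s) (i+1)) then (1:ℕ) else 0) m]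
  apply Finset.sum_congr rfl
  intro i _
  have e1 : h (List.ofFn s) (i : ℕ)
      = ∑ l ∈ Finset.univ.filter (fun l : Fin m => l < i), (if s l then (1:ℤ) else -1) := by
    rw [h_ofFn s i (le_of_lt i.isLt)]
    apply Finset.sum_congr
    · apply Finset.filter_congr
      intro l _
      simp only [Fin.lt_def]
    · intro l _
      rfl
  have e2 : h (List.ofFn s) ((i : ℕ) + 1)
      = ∑ l ∈ Finset.univ.filter (fun l : Fin m => l ≤ i), (if s l then (1:ℤ) else -1) := by
    rw [h_ofFn s ((i : ℕ)+1) i.isLt]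
    apply Finset.sum_congr
    · apply Finset.filter_congr
      intro l _
      simp only [Fin.le_def]
      omega
    · intro l _
      rfl
  rw [e1, e2]

theorem card_bal (n : ℕ) :
    ((Ls (2*n)).filter (fun l => wsum l = 0)).card = Nat.choose (2*n) n := by
  classical
  rw [card_filter_Ls]
  have hstep : Finset.univ.filter (fun s : Fin (2*n) → Bool => wsum (List.ofFn s) = 0)
      = Finset.univ.filter (fun s : Fin (2*n) → Bool =>
          (Finset.univ.filter (fun i => s i = true)).card = n) := by
    apply Finset.filter_congr
    intro s _
    simp only [bal_iff_card s]
  rw [hstep]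
  have hb : (Finset.univ.filter (fun s : Fin (2*n) → Bool =>
      (Finset.univ.filter (fun i => s i = true)).card = n)).card
      = (Finset.powersetCard n (Finset.univ : Finset (Fin (2*n)))).card := by
    apply Finset.card_nbij' (fun s => Finset.univ.filter (fun i => s i = true))
      (fun A => fun i => decide (i ∈ A))
    · intro s hs
      rw [Finset.mem_coe, Finset.mem_filter] at hs
      rw [Finset.mem_coe, Finset.mem_powersetCard]
      exact ⟨Finset.filter_subset _ _, hs.2⟩
    · intro A hA
      rw [Finset.mem_coe, Finset.mem_powersetCard] at hA
      rw [Finset.mem_coe, Finset.mem_filter]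
      refine ⟨Finset.mem_univ _, ?_⟩
      have hAe : Finset.univ.filter (fun i => (fun i => decide (i ∈ A)) i = true) = A := by
        ext i
        simp
      rw [hAe, hA.2]
    · intro s _
      funext i
      simp
    · intro A _
      ext i
      simp
  rw [hb, Finset.card_powersetCard, Finset.card_univ, Fintype.card_fin]

end CF


/-- **Chung–Feller theorem.** A lattice path with `2n` steps is encoded by
`s : Fin (2n) → Bool` (`true` = up step `(1,1)`, `false` = down step `(1,-1)`).
A step `i` is above the x-axis when the larger of its two endpoint heights is
positive.  For each `r ∈ {0, …, n}`, the number of paths with `n` up steps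
(hence ending at `(2n, 0)`) having exactly `2r` steps above the x-axis equals
the Catalan number `C_n = (1/(n+1))·binom(2n, n)`. -/
theorem stmt6 (n r : ℕ) (hr : r ≤ n) :
    ((Finset.univ.filter (fun s : Fin (2 * n) → Bool =>
        (Finset.univ.filter (fun i => s i = true)).card = n ∧
        (Finset.univ.filter (fun i : Fin (2 * n) =>
          0 < max
            (∑ l ∈ Finset.univ.filter (fun l : Fin (2 * n) => l < i),
              (if s l then (1 : ℤ) else -1))
            (∑ l ∈ Finset.univ.filter (fun l : Fin (2 * n) => l ≤ i),
              (if s l then (1 : ℤ) else -1)))).card = 2 * r)).card : ℚ)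
      = (Nat.choose (2 * n) n : ℚ) / (n + 1) := by
  classical
  have hcard : (Finset.univ.filter (fun s : Fin (2 * n) → Bool =>
        (Finset.univ.filter (fun i => s i = true)).card = n ∧
        (Finset.univ.filter (fun i : Fin (2 * n) =>
          0 < max
            (∑ l ∈ Finset.univ.filter (fun l : Fin (2 * n) => l < i),
              (if s l then (1 : ℤ) else -1))
            (∑ l ∈ Finset.univ.filter (fun l : Fin (2 * n) => l ≤ i),
              (if s l then (1 : ℤ) else -1)))).card = 2 * r)).card
      = CF.F' (2*n) (2*r) := by
    rw [CF.F', CF.Fs, CF.card_filter_Ls]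
    congr 1
    apply Finset.filter_congr
    intro s _
    rw [CF.bal_iff_card s, CF.pos_ofFn s]
  have hterm : ∀ r' ∈ Finset.range (n+1), CF.F' (2*n) (2*r') = CF.F' (2*n) (2*r) := by
    intro r' hr'
    rw [Finset.mem_range] at hr'
    exact (CF.F'_indep n r' (Nat.lt_succ_iff.mp hr')).trans (CF.F'_indep n r hr).symm
  have hsum : (n+1) * CF.F' (2*n) (2*r) = Nat.choose (2*n) n := by
    calc (n+1) * CF.F' (2*n) (2*r)
        = ∑ _r' ∈ Finset.range (n+1), CF.F' (2*n) (2*r) := by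
          rw [Finset.sum_const, Finset.card_range, smul_eq_mul]
      _ = ∑ r' ∈ Finset.range (n+1), CF.F' (2*n) (2*r') := (Finset.sum_congr rfl hterm).symm
      _ = Nat.choose (2*n) n := by rw [CF.sum_F', CF.card_bal]
  rw [hcard]
  have hne : ((n:ℚ)+1) ≠ 0 := by positivity
  rw [eq_div_iff hne]
  have := congrArg (fun x : ℕ => (x : ℚ)) hsum
  push_cast at this ⊢
  linarith
end

section
/- The number of lattice paths from (0,0) to (kn,0) consisting of (k−1)n up steps (1,1) and n down steps (1,1−k) with exactly r up steps below the x-axis is independent of r for r in {0,1,...,(k−1)n}, and equals the Fuss–Catalan number C_{n,k} = (1/(kn+1))·binom(kn+1,n). -/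
open Finset

namespace Huq

variable (k m : ℕ) (t : ℕ → Bool)

def w (k : ℕ) (b : Bool) : ℤ := if b then 1 else 1 - (k : ℤ)

def S (b : ℕ) : ℤ := ∑ i ∈ Finset.range b, w k (t i)

def C (a b : ℕ) (c : ℤ) : ℕ :=
  ((Finset.Ico a b).filter (fun i => t i = true ∧ S k t i ≤ c)).card

def r (x : ℕ) : ℕ := C k t (x + 1) (x + m) (S k t x)

lemma S_succ (a : ℕ) : S k t (a + 1) = S k t a + w k (t a) :=
  Finset.sum_range_succ _ _

variable (hper : ∀ b, t (b + m) = t b) (hone : S k t m = 1)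

include hper hone in
lemma S_add_per (b : ℕ) : S k t (b + m) = S k t b + 1 := by
  induction b with
  | zero => simpa [S] using hone
  | succ b ih =>
    have : b + 1 + m = (b + m) + 1 := by omega
    rw [this, S_succ, ih, hper, S_succ]; ring

include hper hone in
lemma C_shift (a b : ℕ) (c : ℤ) : C k t (a + m) (b + m) c = C k t a b (c - 1) := by
  classical
  unfold C
  apply Finset.card_nbij' (fun i => i - m) (fun i => i + m)
  · intro i hi
    simp only [Finset.mem_coe, Finset.mem_filter, Finset.mem_Ico] at hi ⊢
    obtain ⟨⟨h1, h2⟩, h3, h4⟩ := hi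
    have him : i - m + m = i := by omega
    refine ⟨⟨by omega, by omega⟩, ?_, ?_⟩
    · rw [← hper (i - m), him]; exact h3
    · have := S_add_per k m t hper hone (i - m)
      rw [him] at this; omega
  · intro i hi
    simp only [Finset.mem_coe, Finset.mem_filter, Finset.mem_Ico] at hi ⊢
    obtain ⟨⟨h1, h2⟩, h3, h4⟩ := hi
    refine ⟨⟨by omega, by omega⟩, by rw [hper]; exact h3, ?_⟩
    have := S_add_per k m t hper hone i; omega
  · intro i hi
    simp only [Finset.mem_coe, Finset.mem_filter, Finset.mem_Ico] at hi
    dsimp only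
    omega
  · intro i hi; dsimp only; omega

lemma card_filter_Ico_split (p : ℕ → Prop) [DecidablePred p] (a b c : ℕ)
    (hab : a ≤ b) (hbc : b ≤ c) :
    ((Finset.Ico a c).filter p).card
      = ((Finset.Ico a b).filter p).card + ((Finset.Ico b c).filter p).card := by
  rw [← Finset.Ico_union_Ico_eq_Ico hab hbc, Finset.filter_union,
    Finset.card_union_of_disjoint
      (Finset.disjoint_filter_filter (Finset.Ico_disjoint_Ico_consecutive a b c))]

lemma C_split (a b c' : ℕ) (c : ℤ) (hab : a ≤ b) (hbc : b ≤ c') :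
    C k t a c' c = C k t a b c + C k t b c' c :=
  card_filter_Ico_split _ a b c' hab hbc

lemma C_mono (a b : ℕ) (c c' : ℤ) (h : c ≤ c') : C k t a b c ≤ C k t a b c' := by
  classical
  apply Finset.card_le_card
  intro i hi
  simp only [Finset.mem_filter] at hi ⊢
  exact ⟨hi.1, hi.2.1, le_trans hi.2.2 h⟩

lemma C_single_true (x : ℕ) (hx : t x = true) : C k t x (x + 1) (S k t x) = 1 := by
  classical
  unfold C
  rw [Nat.Ico_succ_singleton, Finset.filter_singleton]
  simp [hx]

lemma C_single_zero (x : ℕ) (c : ℤ) (hc : S k t x > c) : C k t x (x + 1) c = 0 := by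
  classical
  unfold C
  rw [Nat.Ico_succ_singleton, Finset.filter_singleton]
  have : ¬ (t x = true ∧ S k t x ≤ c) := by rintro ⟨-, h⟩; omega
  simp [this]

include hper hone in
lemma lemB (x y : ℕ) (hxy : x < y) (hy : t y = true) (hS : S k t y ≤ S k t x) :
    r k m t y < r k m t x := by
  have hm : 1 ≤ m := by
    by_contra h
    have : m = 0 := by omega
    rw [this] at hone
    simp [S] at hone
  have e1 : C k t (x + 1) (y + m) (S k t y)
      = C k t (x + 1) y (S k t y) + C k t y (y + m) (S k t y) :=
    C_split k t _ _ _ _ (by omega) (by omega)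
  have e2 : C k t (x + 1) (y + m) (S k t y)
      = C k t (x + 1) (x + m) (S k t y) + C k t (x + m) (y + m) (S k t y) :=
    C_split k t _ _ _ _ (by omega) (by omega)
  have e3 : C k t (x + m) (y + m) (S k t y) = C k t x y (S k t y - 1) :=
    C_shift k m t hper hone x y _
  have e4 : C k t y (y + m) (S k t y)
      = C k t y (y + 1) (S k t y) + C k t (y + 1) (y + m) (S k t y) :=
    C_split k t _ _ _ _ (by omega) (by omega)
  have e5 : C k t y (y + 1) (S k t y) = 1 := C_single_true k t y hy
  have e6 : C k t x y (S k t y - 1)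
      = C k t x (x + 1) (S k t y - 1) + C k t (x + 1) y (S k t y - 1) :=
    C_split k t _ _ _ _ (by omega) (by omega)
  have e7 : C k t x (x + 1) (S k t y - 1) = 0 :=
    C_single_zero k t x _ (by omega)
  have e8 : C k t (x + 1) y (S k t y - 1) ≤ C k t (x + 1) y (S k t y) :=
    C_mono k t _ _ _ _ (by omega)
  have e9 : C k t (x + 1) (x + m) (S k t y) ≤ C k t (x + 1) (x + m) (S k t x) :=
    C_mono k t _ _ _ _ hS
  unfold r
  omega

include hper hone in
lemma r_period (x : ℕ) : r k m t (x + m) = r k m t x := by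
  unfold r
  have h1 : x + m + 1 = (x + 1) + m := by omega
  have h2 : x + m + m = (x + m) + m := by omega
  rw [h1, h2, C_shift k m t hper hone (x + 1) (x + m), S_add_per k m t hper hone]
  congr 1
  omega

include hper in
lemma window_count (v : Bool) (a : ℕ) :
    ((Finset.Ico a (a + m)).filter (fun i => t i = v)).card
      = ((Finset.range m).filter (fun i => t i = v)).card := by
  classical
  induction a with
  | zero => rw [Finset.range_eq_Ico]; norm_num
  | succ a ih =>
    have hm1 : a + 1 + m = a + m + 1 := by omega
    rw [hm1]
    have key : ((Finset.Ico a (a + m + 1)).filter (fun i => t i = v)).card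
        = ((Finset.Ico a (a + m)).filter (fun i => t i = v)).card
          + ((Finset.Ico (a + m) (a + m + 1)).filter (fun i => t i = v)).card :=
      card_filter_Ico_split _ a (a + m) (a + m + 1) (by omega) (by omega)
    have key2 : ((Finset.Ico a (a + m + 1)).filter (fun i => t i = v)).card
        = ((Finset.Ico a (a + 1)).filter (fun i => t i = v)).card
          + ((Finset.Ico (a + 1) (a + m + 1)).filter (fun i => t i = v)).card :=
      card_filter_Ico_split _ a (a + 1) (a + m + 1) (by omega) (by omega)
    have s1 : ((Finset.Ico a (a + 1)).filter (fun i => t i = v)).card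
        = ((Finset.Ico (a + m) (a + m + 1)).filter (fun i => t i = v)).card := by
      rw [Nat.Ico_succ_singleton, Nat.Ico_succ_singleton,
        Finset.filter_singleton, Finset.filter_singleton, hper a]
      split_ifs <;> simp
    omega

include hper in
lemma r_bound (x : ℕ) (hm : 0 < m) (hx : t x = true) :
    r k m t x + 1 ≤ ((Finset.range m).filter (fun i => t i = true)).card := by
  classical
  have e1 : C k t x (x + m) (S k t x)
      = C k t x (x + 1) (S k t x) + C k t (x + 1) (x + m) (S k t x) :=
    C_split k t _ _ _ _ (by omega) (by omega)
  have e2 : C k t x (x + 1) (S k t x) = 1 := C_single_true k t x hx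
  have e3 : C k t x (x + m) (S k t x)
      ≤ ((Finset.Ico x (x + m)).filter (fun i => t i = true)).card := by
    apply Finset.card_le_card
    intro i hi
    simp only [Finset.mem_filter] at hi ⊢
    exact ⟨hi.1, hi.2.1⟩
  have e4 := window_count m t hper true x
  unfold r
  omega

include hper hone in
lemma r_inj (x y : ℕ) (hx : t x = true) (hy : t y = true) (hxy : x < y)
    (hym : y < x + m) : r k m t x ≠ r k m t y := by
  rcases le_or_gt (S k t y) (S k t x) with h | h
  · have := lemB k m t hper hone x y hxy hy h
    omega
  · have h2 : S k t (x + m) ≤ S k t y := by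
      rw [S_add_per k m t hper hone]; omega
    have h3 : t (x + m) = true := by rw [hper]; exact hx
    have := lemB k m t hper hone y (x + m) hym h3 h2
    have := r_period k m t hper hone x
    omega

include hper hone in
lemma r_exists_unique (rv : ℕ)
    (hrv : rv + 1 ≤ ((Finset.range m).filter (fun i => t i = true)).card) :
    ∃! j, (j < m ∧ t j = true) ∧ r k m t j = rv := by
  classical
  have hm : 0 < m := by
    by_contra h
    have : m = 0 := by omega
    rw [this] at hone
    simp [S] at hone
  have hinj : ∀ x ∈ (Finset.range m).filter (fun i => t i = true),
      ∀ y ∈ (Finset.range m).filter (fun i => t i = true),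
      r k m t x = r k m t y → x = y := by
    intro x hx y hy hxy
    simp only [Finset.mem_filter, Finset.mem_range] at hx hy
    rcases lt_trichotomy x y with h | h | h
    · exact absurd hxy (r_inj k m t hper hone x y hx.2 hy.2 h (by omega))
    · exact h
    · exact absurd hxy.symm (r_inj k m t hper hone y x hy.2 hx.2 h (by omega))
  have himage : ((Finset.range m).filter (fun i => t i = true)).image (r k m t)
      = Finset.range ((Finset.range m).filter (fun i => t i = true)).card := by
    apply Finset.eq_of_subset_of_card_le
    · intro v hv
      simp only [Finset.mem_image] at hv
      obtain ⟨j, hj, hjv⟩ := hv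
      have hj' := hj
      simp only [Finset.mem_filter, Finset.mem_range] at hj'
      have := r_bound k m t hper j hm hj'.2
      simp only [Finset.mem_range]
      omega
    · rw [Finset.card_range, Finset.card_image_of_injOn hinj]
  have hrv' : rv ∈ ((Finset.range m).filter (fun i => t i = true)).image (r k m t) := by
    rw [himage, Finset.mem_range]; omega
  simp only [Finset.mem_image] at hrv'
  obtain ⟨j, hj, hjv⟩ := hrv'
  have hj' := hj
  simp only [Finset.mem_filter, Finset.mem_range] at hj'
  refine ⟨j, ⟨⟨hj'.1, hj'.2⟩, hjv⟩, ?_⟩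
  rintro j' ⟨⟨hj'm, hj't⟩, hj'v⟩
  refine hinj j' ?_ j hj (by rw [hj'v, hjv])
  simp only [Finset.mem_filter, Finset.mem_range]
  exact ⟨hj'm, hj't⟩

section Bridge

variable {k n : ℕ} (τ : Fin (k * n + 1) → Bool)

def tN (τ : Fin (k * n + 1) → Bool) : ℕ → Bool :=
  fun b => τ ⟨b % (k * n + 1), Nat.mod_lt _ (Nat.succ_pos _)⟩

lemma tN_per (b : ℕ) : tN τ (b + (k * n + 1)) = tN τ b := by
  simp [tN, Nat.add_mod_right]

lemma tN_lt {i : ℕ} (h : i < k * n + 1) : tN τ i = τ ⟨i, h⟩ := by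
  simp [tN, Nat.mod_eq_of_lt h]

lemma count_univ (v : Bool) :
    ((Finset.range (k * n + 1)).filter (fun b => tN τ b = v)).card
      = (Finset.univ.filter (fun i => τ i = v)).card := by
  classical
  rw [Finset.card_filter, Finset.card_filter,
    ← Fin.sum_univ_eq_sum_range (fun b => if tN τ b = v then 1 else 0) (k * n + 1)]
  apply Finset.sum_congr rfl
  intro i _
  rw [tN_lt τ i.isLt]

lemma w_eq_ind (b : Bool) : w k b = 1 - (k : ℤ) * (if b = false then 1 else 0) := by
  cases b <;> simp [w]

variable (hτ : (Finset.univ.filter (fun i => τ i = false)).card = n)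

include hτ in
lemma hone_bridge : S k (tN τ) (k * n + 1) = 1 := by
  classical
  unfold S
  rw [← Fin.sum_univ_eq_sum_range (fun b => w k (tN τ b)) (k * n + 1)]
  have : ∀ i : Fin (k * n + 1), w k (tN τ i.val) = w k (τ i) := by
    intro i; rw [tN_lt τ i.isLt]
  rw [Finset.sum_congr rfl (fun i _ => this i)]
  have e : ∀ i : Fin (k * n + 1), w k (τ i)
      = 1 - (k : ℤ) * (if τ i = false then 1 else 0) := fun i => w_eq_ind _
  rw [Finset.sum_congr rfl (fun i _ => e i), Finset.sum_sub_distrib,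
    Finset.sum_const, ← Finset.mul_sum, Finset.sum_boole, hτ]
  simp only [Finset.card_univ, Fintype.card_fin, nsmul_eq_mul, mul_one]
  push_cast
  ring

include hτ in
lemma htrue_bridge (hk : 1 ≤ k) :
    ((Finset.range (k * n + 1)).filter (fun i => tN τ i = true)).card
      = (k - 1) * n + 1 := by
  classical
  rw [count_univ]
  have h1 := Finset.card_filter_add_card_filter_not
    (s := (Finset.univ : Finset (Fin (k * n + 1)))) (p := fun i => τ i = true)
  have h2 : (Finset.univ.filter (fun i => ¬ τ i = true)).card = n := by
    have he : (Finset.univ.filter (fun i : Fin (k * n + 1) => ¬ τ i = true))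
        = (Finset.univ.filter (fun i => τ i = false)) := by
      apply Finset.filter_congr; intro i _; simp
    rw [he, hτ]
  have h3 : (k - 1) * n + n = k * n := by
    cases k with
    | zero => omega
    | succ k' => simp [Nat.succ_sub_one, Nat.succ_mul]
  simp only [Finset.card_univ, Fintype.card_fin] at h1
  omega

def cut (τ : Fin (k * n + 1) → Bool) (j : Fin (k * n + 1)) : Fin (k * n) → Bool :=
  fun i => tN τ (j.val + 1 + i.val)

lemma fin_filter_sum {M : ℕ} (g : ℕ → ℤ) (i : Fin M) :
    ∑ l ∈ Finset.univ.filter (fun l : Fin M => l < i), g l.val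
      = ∑ l ∈ Finset.range i.val, g l := by
  classical
  apply Finset.sum_bij (fun l _ => l.val)
  · intro a ha
    simp only [Finset.mem_filter, Finset.mem_univ, true_and, Fin.lt_def] at ha
    simpa [Finset.mem_range] using ha
  · intro a _ b _ h
    exact Fin.val_injective h
  · intro b hb
    simp only [Finset.mem_range] at hb
    refine ⟨⟨b, lt_trans hb i.isLt⟩, ?_, rfl⟩
    simp only [Finset.mem_filter, Finset.mem_univ, true_and, Fin.lt_def]
    exact hb
  · intro a _; rfl

lemma tN_at (j : Fin (k * n + 1)) : tN τ j.val = τ j := by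
  rw [tN_lt τ j.isLt]

lemma S_cut_succ (j : Fin (k * n + 1)) (hj : τ j = true) :
    S k (tN τ) (j.val + 1) = S k (tN τ) j.val + 1 := by
  rw [S_succ, tN_at τ j, hj]
  simp [w]

lemma B0 (j : Fin (k * n + 1)) (i : Fin (k * n)) :
    ∑ l ∈ Finset.univ.filter (fun l : Fin (k * n) => l < i), w k (cut τ j l)
      = S k (tN τ) (j.val + 1 + i.val) - S k (tN τ) (j.val + 1) := by
  have h1 : S k (tN τ) (j.val + 1 + i.val)
      = S k (tN τ) (j.val + 1) + ∑ l ∈ Finset.range i.val, w k (tN τ (j.val + 1 + l)) := by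
    unfold S
    exact Finset.sum_range_add (fun b => w k (tN τ b)) (j.val + 1) i.val
  rw [h1]
  rw [show (∑ l ∈ Finset.univ.filter (fun l : Fin (k * n) => l < i), w k (cut τ j l))
      = ∑ l ∈ Finset.range i.val, w k (tN τ (j.val + 1 + l)) from
    fin_filter_sum (fun l => w k (tN τ (j.val + 1 + l))) i]
  ring

lemma fin_filter_card {M : ℕ} (p : ℕ → Prop) [DecidablePred p] (a : ℕ) :
    (Finset.univ.filter (fun i : Fin M => p (a + i.val))).card
      = ((Finset.Ico a (a + M)).filter p).card := by
  classical
  apply Finset.card_bij (fun i _ => a + i.val)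
  · intro i hi
    simp only [Finset.mem_filter, Finset.mem_univ, true_and] at hi
    simp only [Finset.mem_filter, Finset.mem_Ico]
    exact ⟨⟨by omega, by have := i.isLt; omega⟩, hi⟩
  · intro i _ j _ h
    exact Fin.val_injective (by omega)
  · intro b hb
    simp only [Finset.mem_filter, Finset.mem_Ico] at hb
    refine ⟨⟨b - a, by omega⟩, ?_, by simp; omega⟩
    simp only [Finset.mem_filter, Finset.mem_univ, true_and]
    have : a + (b - a) = b := by omega
    rw [this]
    exact hb.2

lemma B1 (j : Fin (k * n + 1)) (hj : τ j = true) :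
    (Finset.univ.filter (fun i : Fin (k * n) => cut τ j i = true ∧
      (∑ l ∈ Finset.univ.filter (fun l : Fin (k * n) => l < i), w k (cut τ j l)) < 0)).card
    = r k (k * n + 1) (tN τ) j.val := by
  classical
  have hs1 := S_cut_succ τ j hj
  have hcong : (Finset.univ.filter (fun i : Fin (k * n) => cut τ j i = true ∧
      (∑ l ∈ Finset.univ.filter (fun l : Fin (k * n) => l < i), w k (cut τ j l)) < 0))
      = (Finset.univ.filter (fun i : Fin (k * n) =>
          tN τ (j.val + 1 + i.val) = true ∧
          S k (tN τ) (j.val + 1 + i.val) ≤ S k (tN τ) j.val)) := by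
    apply Finset.filter_congr
    intro i _
    rw [B0 τ j i]
    unfold cut
    constructor
    · rintro ⟨h1, h2⟩; exact ⟨h1, by omega⟩
    · rintro ⟨h1, h2⟩; exact ⟨h1, by omega⟩
  rw [hcong]
  have := fin_filter_card (M := k * n)
    (fun b => tN τ b = true ∧ S k (tN τ) b ≤ S k (tN τ) j.val) (j.val + 1)
  rw [this]
  have h5 : j.val + 1 + k * n = j.val + (k * n + 1) := by omega
  rw [h5]
  rfl

lemma B2 (j : Fin (k * n + 1)) (hj : τ j = true) :
    (Finset.univ.filter (fun i : Fin (k * n) => cut τ j i = false)).card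
      = (Finset.univ.filter (fun i => τ i = false)).card := by
  classical
  have h1 : (Finset.univ.filter (fun i : Fin (k * n) => cut τ j i = false)).card
      = ((Finset.Ico (j.val + 1) (j.val + 1 + k * n)).filter (fun b => tN τ b = false)).card :=
    fin_filter_card (M := k * n) (fun b => tN τ b = false) (j.val + 1)
  have h2 : ((Finset.Ico j.val (j.val + (k * n + 1))).filter (fun b => tN τ b = false)).card
      = ((Finset.Ico j.val (j.val + 1)).filter (fun b => tN τ b = false)).card
        + ((Finset.Ico (j.val + 1) (j.val + (k * n + 1))).filter (fun b => tN τ b = false)).card :=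
    card_filter_Ico_split _ _ _ _ (by omega) (by omega)
  have h3 : ((Finset.Ico j.val (j.val + 1)).filter (fun b => tN τ b = false)).card = 0 := by
    rw [Nat.Ico_succ_singleton, Finset.filter_singleton, tN_at τ j, hj]
    simp
  have h4 := window_count (k * n + 1) (tN τ) (tN_per τ) false j.val
  rw [count_univ τ false] at h4
  have h5 : j.val + 1 + k * n = j.val + (k * n + 1) := by omega
  rw [h1, h5]
  omega

def rot (s : Fin (k * n) → Bool) (j : Fin (k * n + 1)) : Fin (k * n + 1) → Bool :=
  fun i => Fin.cons (α := fun _ => Bool) true s (i - j)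

lemma rot_self (s : Fin (k * n) → Bool) (j : Fin (k * n + 1)) : rot s j j = true := by
  unfold rot
  rw [sub_self]
  exact Fin.cons_zero _ _

lemma rot_cut (s : Fin (k * n) → Bool) (j : Fin (k * n + 1)) : cut (rot s j) j = s := by
  funext i
  unfold cut tN
  have hidx : (⟨(j.val + 1 + i.val) % (k * n + 1),
      Nat.mod_lt _ (Nat.succ_pos _)⟩ : Fin (k * n + 1)) = j + Fin.succ i := by
    apply Fin.ext
    rw [Fin.val_add]
    simp only [Fin.val_succ]
    congr 1
    omega
  rw [hidx]
  unfold rot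
  rw [add_sub_cancel_left]
  exact Fin.cons_succ _ _ _

lemma cut_rot (j : Fin (k * n + 1)) (hj : τ j = true) : rot (cut τ j) j = τ := by
  funext i
  unfold rot
  rcases eq_or_ne i j with h | h
  · subst h
    rw [sub_self, Fin.cons_zero, hj]
  · have hd : (i - j).val ≠ 0 := by
      intro h0
      apply h
      have : i - j = 0 := Fin.ext h0
      have := sub_eq_zero.mp this
      exact this
    have hd1 : (i - j).val - 1 < k * n := by
      have := (i - j).isLt; omega
    have hsucc : i - j = Fin.succ ⟨(i - j).val - 1, hd1⟩ := by
      apply Fin.ext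
      simp only [Fin.val_succ]
      omega
    rw [hsucc, Fin.cons_succ]
    unfold cut tN
    have hval : (j.val + 1 + ((i - j).val - 1)) % (k * n + 1) = i.val := by
      have h2 : j.val + 1 + ((i - j).val - 1) = j.val + (i - j).val := by omega
      rw [h2]
      have h3 : (j + (i - j)).val = (j.val + (i - j).val) % (k * n + 1) := Fin.val_add _ _
      rw [← h3, add_sub_cancel]
    congr 1
    exact Fin.ext hval

end Bridge

lemma cardT (m n : ℕ) :
    (Finset.univ.filter (fun τ : Fin m → Bool =>
      (Finset.univ.filter (fun i => τ i = false)).card = n)).card = Nat.choose m n := by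
  classical
  have hpc : (Finset.powersetCard n (Finset.univ : Finset (Fin m))).card = Nat.choose m n := by
    rw [Finset.card_powersetCard, Finset.card_univ, Fintype.card_fin]
  rw [← hpc]
  apply Finset.card_bij (fun τ _ => Finset.univ.filter (fun i => τ i = false))
  · intro τ hτ
    rw [Finset.mem_powersetCard]
    exact ⟨Finset.filter_subset _ _, (Finset.mem_filter.mp hτ).2⟩
  · intro a _ b _ h
    funext i
    have : (i ∈ Finset.univ.filter (fun i => a i = false))
        ↔ (i ∈ Finset.univ.filter (fun i => b i = false)) := by rw [h]
    simp only [Finset.mem_filter, Finset.mem_univ, true_and] at this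
    cases ha : a i <;> cases hb : b i <;> simp [ha, hb] at this ⊢
  · intro A hA
    rw [Finset.mem_powersetCard] at hA
    refine ⟨fun i => if i ∈ A then false else true, ?_, ?_⟩
    · rw [Finset.mem_filter]
      refine ⟨Finset.mem_univ _, ?_⟩
      rw [← hA.2]
      congr 1
      ext i
      simp only [Finset.mem_filter, Finset.mem_univ, true_and]
      split_ifs with h <;> simp [h]
    · ext i
      simp only [Finset.mem_filter, Finset.mem_univ, true_and]
      split_ifs with h <;> simp [h]

end Huq

open Huq in
/-- **Huq's corollary.** A lattice path from `(0,0)` to `(kn, 0)` is encoded by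
`s : Fin (k·n) → Bool` (`true` = up step `(1,1)`, `false` = down step `(1, 1-k)`)
with exactly `n` down steps (hence `(k-1)n` up steps and the path ends at height `0`).
An up step is below the x-axis when its starting height is negative.
For each `r ∈ {0, 1, …, (k-1)n}`, the number of such paths with exactly `r` up
steps below the x-axis equals the Fuss–Catalan number
`C_{n,k} = (1/(kn+1))·binom(kn+1, n)` (in particular it is independent of `r`). -/
theorem stmt7 (k n : ℕ) (hk : 2 ≤ k) (r : ℕ) (hr : r ≤ (k - 1) * n) :
    ((Finset.univ.filter (fun s : Fin (k * n) → Bool =>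
        (Finset.univ.filter (fun i => s i = false)).card = n ∧
        (Finset.univ.filter (fun i : Fin (k * n) => s i = true ∧
          (∑ l ∈ Finset.univ.filter (fun l : Fin (k * n) => l < i),
            (if s l then (1 : ℤ) else 1 - (k : ℤ))) < 0)).card = r)).card : ℚ)
      = (Nat.choose (k * n + 1) n : ℚ) / (k * n + 1) := by
  classical
  set P := Finset.univ.filter (fun s : Fin (k * n) → Bool =>
        (Finset.univ.filter (fun i => s i = false)).card = n ∧
        (Finset.univ.filter (fun i : Fin (k * n) => s i = true ∧
          (∑ l ∈ Finset.univ.filter (fun l : Fin (k * n) => l < i),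
            (if s l then (1 : ℤ) else 1 - (k : ℤ))) < 0)).card = r) with hP
  set T := Finset.univ.filter (fun τ : Fin (k * n + 1) → Bool =>
      (Finset.univ.filter (fun i => τ i = false)).card = n) with hT
  have hbij : (P ×ˢ (Finset.univ : Finset (Fin (k * n + 1)))).card = T.card := by
    apply Finset.card_bij (fun p _ => rot p.1 p.2)
    · -- maps into T
      intro p hp
      rw [Finset.mem_product] at hp
      have hp1 := (Finset.mem_filter.mp hp.1).2
      have hjt : rot p.1 p.2 p.2 = true := rot_self p.1 p.2
      have hc : cut (rot p.1 p.2) p.2 = p.1 := rot_cut p.1 p.2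
      have hB2 := B2 (rot p.1 p.2) p.2 hjt
      rw [hc] at hB2
      rw [hT, Finset.mem_filter]
      exact ⟨Finset.mem_univ _, by rw [← hB2, hp1.1]⟩
    · -- injective
      intro p hp q hq heq
      rw [Finset.mem_product] at hp hq
      have hp1 := (Finset.mem_filter.mp hp.1).2
      have hq1 := (Finset.mem_filter.mp hq.1).2
      have hjtp : rot p.1 p.2 p.2 = true := rot_self p.1 p.2
      have hjtq : rot p.1 p.2 q.2 = true := by rw [heq]; exact rot_self q.1 q.2
      have hcp : cut (rot p.1 p.2) p.2 = p.1 := rot_cut p.1 p.2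
      have hcq : cut (rot p.1 p.2) q.2 = q.1 := by rw [heq]; exact rot_cut q.1 q.2
      have hτn : (Finset.univ.filter (fun i => rot p.1 p.2 i = false)).card = n := by
        have hB2 := B2 (rot p.1 p.2) p.2 hjtp
        rw [hcp] at hB2
        rw [← hB2, hp1.1]
      have hper := tN_per (rot p.1 p.2)
      have hone := hone_bridge (rot p.1 p.2) hτn
      have htrue := htrue_bridge (rot p.1 p.2) hτn (by omega)
      have hEU := r_exists_unique k (k * n + 1) (tN (rot p.1 p.2)) hper hone r
        (by rw [htrue]; omega)
      have hrp : Huq.r k (k * n + 1) (tN (rot p.1 p.2)) p.2.val = r := by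
        have hB1 := B1 (rot p.1 p.2) p.2 hjtp
        rw [hcp] at hB1
        rw [← hB1]
        exact hp1.2
      have hrq : Huq.r k (k * n + 1) (tN (rot p.1 p.2)) q.2.val = r := by
        have hB1 := B1 (rot p.1 p.2) q.2 hjtq
        rw [hcq] at hB1
        rw [← hB1]
        exact hq1.2
      obtain ⟨j0, _, huniq⟩ := hEU
      have hpj := huniq p.2.val ⟨⟨p.2.isLt, by rw [tN_at]; exact hjtp⟩, hrp⟩
      have hqj := huniq q.2.val ⟨⟨q.2.isLt, by rw [tN_at]; exact hjtq⟩, hrq⟩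
      have h2 : p.2 = q.2 := Fin.ext (hpj.trans hqj.symm)
      have h1 : p.1 = q.1 := by rw [← hcp, ← hcq, h2]
      exact Prod.ext h1 h2
    · -- surjective
      intro τ hτmem
      have hτn := (Finset.mem_filter.mp hτmem).2
      have hper := tN_per τ
      have hone := hone_bridge τ hτn
      have htrue := htrue_bridge τ hτn (by omega)
      have hEU := r_exists_unique k (k * n + 1) (tN τ) hper hone r (by rw [htrue]; omega)
      obtain ⟨j0, ⟨⟨hj0m, hj0t⟩, hj0r⟩, _⟩ := hEU
      set j : Fin (k * n + 1) := ⟨j0, hj0m⟩ with hjdef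
      have hjt : τ j = true := by rw [← tN_at τ j]; exact hj0t
      refine ⟨(cut τ j, j), ?_, cut_rot τ j hjt⟩
      rw [Finset.mem_product]
      refine ⟨?_, Finset.mem_univ _⟩
      rw [hP, Finset.mem_filter]
      refine ⟨Finset.mem_univ _, B2 τ j hjt ▸ hτn, ?_⟩
      have hB1 := B1 τ j hjt
      exact hB1.trans hj0r
  have hTP : T.card = P.card * (k * n + 1) := by
    rw [← hbij, Finset.card_product, Finset.card_univ, Fintype.card_fin]
  have hTC : T.card = Nat.choose (k * n + 1) n := cardT (k * n + 1) n
  have hnum : (P.card : ℚ) * (k * n + 1) = Nat.choose (k * n + 1) n := by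
    exact_mod_cast (hTP ▸ hTC : P.card * (k * n + 1) = Nat.choose (k * n + 1) n)
  have hne : ((k * n + 1 : ℕ) : ℚ) ≠ 0 := by exact_mod_cast Nat.succ_ne_zero (k * n)
  rw [eq_div_iff (by push_cast at hne ⊢; exact hne)]
  push_cast at hnum ⊢
  linarith
end

section
/- The k-continuant K_{k,n}(x_1,...,x_n), defined by K_{k,n} = x_1 x_2 ··· x_n for n < k and K_{k,n}(x_1,...,x_n) = K_{k,n−k}(x_1,...,x_{n−k}) + K_{k,n−1}(x_1,...,x_{n−1})·x_n for n ≥ k, equals the sum, over all ways of deleting any number of pairwise disjoint blocks of k consecutive variables from the product x_1 x_2 ··· x_n, of the resulting products. -/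
/-- The `k`-continuant `K_{k,n}(x_1, …, x_n)` (variables zero-indexed: `x i` is
`x_{i+1}`): `K_{k,n} = x_1 ⋯ x_n` for `n < k` and
`K_{k,n} = K_{k,n-k}(x_1, …, x_{n-k}) + K_{k,n-1}(x_1, …, x_{n-1})·x_n` for `n ≥ k`.
(The disjunct `k = 0` in the guard is only there to ensure termination; it is
irrelevant for `k ≥ 2`.) -/
def contK (k : ℕ) (x : ℕ → ℚ) : ℕ → ℚ := fun n =>
  if h : n < k ∨ k = 0 then ∏ i ∈ Finset.range n, x i
  else contK k x (n - k) + contK k x (n - 1) * x (n - 1)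
termination_by n => n
decreasing_by all_goals omega

/-- `D ⊆ {0, …, n-1}` is a disjoint union of blocks of `k` consecutive indices. -/
def IsBlockUnionNat (k n : ℕ) (D : Finset ℕ) : Prop :=
  ∃ T : Finset ℕ,
    (∀ t ∈ T, t + k ≤ n) ∧
    (∀ t ∈ T, ∀ t' ∈ T, t ≠ t' → t + k ≤ t' ∨ t' + k ≤ t) ∧
    D = T.biUnion (fun t => Finset.Ico t (t + k))

open Classical in
/-- The `k`-continuant `K_{k,n}(x_1, …, x_n)` equals the sum, over all ways of
deleting pairwise disjoint blocks of `k` consecutive variables from the product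
`x_1 x_2 ⋯ x_n`, of the resulting products (deleting nothing gives `x_1 ⋯ x_n`). -/
theorem stmt12 (k : ℕ) (hk : 2 ≤ k) (x : ℕ → ℚ) (n : ℕ) :
    contK k x n =
      ∑ D ∈ (Finset.range n).powerset.filter (fun D => IsBlockUnionNat k n D),
        ∏ i ∈ Finset.range n \ D, x i := by
  induction n using Nat.strong_induction_on with
  | _ n ih =>
  rcases lt_or_ge n k with hn | hn
  · -- base case n < k : only D = ∅
    rw [contK, dif_pos (Or.inl hn)]
    have hset : (Finset.range n).powerset.filter (fun D => IsBlockUnionNat k n D)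
        = {(∅ : Finset ℕ)} := by
      ext D
      simp only [Finset.mem_filter, Finset.mem_powerset, Finset.mem_singleton]
      constructor
      · rintro ⟨hD, T, hT1, hT2, rfl⟩
        have hT : T = ∅ := by
          by_contra h
          obtain ⟨t, ht⟩ := Finset.nonempty_iff_ne_empty.mpr h
          have := hT1 t ht; omega
        simp [hT]
      · rintro rfl
        exact ⟨Finset.empty_subset _, ∅, by simp, by simp, by simp⟩
    rw [hset]
    simp
  · -- recursive case
    have hk0 : ¬ (n < k ∨ k = 0) := by omega
    rw [contK, dif_neg hk0, ih (n - k) (by omega), ih (n - 1) (by omega), Finset.sum_mul]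
    set I := Finset.Ico (n - k) n with hI
    rw [← Finset.sum_filter_add_sum_filter_not
      ((Finset.range n).powerset.filter (fun D => IsBlockUnionNat k n D))
      (fun D => n - 1 ∈ D)]
    congr 1
    · -- sum over S(n-k) = sum over D's containing n-1, via D' ↦ D' ∪ I
      have hIub : ∀ a ∈ I, a < n := by
        intro a ha; simp only [hI, Finset.mem_Ico] at ha; omega
      have hIlb : ∀ a ∈ I, n - k ≤ a := by
        intro a ha; simp only [hI, Finset.mem_Ico] at ha; omega
      -- structure lemma for D in the target set
      have hstr : ∀ D : Finset ℕ, D ⊆ Finset.range n → IsBlockUnionNat k n D → n - 1 ∈ D →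
          I ⊆ D ∧ (D \ I ⊆ Finset.range (n - k) ∧ IsBlockUnionNat k (n - k) (D \ I)) := by
        intro D hDr hB hmem
        obtain ⟨T, hT1, hT2, hDT⟩ := hB
        have hex : ∃ t ∈ T, n - 1 ∈ Finset.Ico t (t + k) := by
          rw [hDT] at hmem; simpa using hmem
        obtain ⟨t0, ht0T, ht0⟩ := hex
        simp only [Finset.mem_Ico] at ht0
        have ht0n := hT1 t0 ht0T
        have ht0eq : t0 = n - k := by omega
        subst ht0eq
        have hother : ∀ t ∈ T, t ≠ n - k → t + k ≤ n - k := by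
          intro t ht htne
          rcases hT2 t ht (n - k) ht0T htne with h | h
          · exact h
          · have := hT1 t ht; omega
        have hIsub : I ⊆ D := by
          intro a ha
          rw [hDT]
          simp only [Finset.mem_biUnion]
          refine ⟨n - k, ht0T, ?_⟩
          simp only [hI, Finset.mem_Ico] at ha ⊢
          omega
        have hDsplit : D \ I = (T.erase (n - k)).biUnion (fun t => Finset.Ico t (t + k)) := by
          ext a
          simp only [Finset.mem_sdiff, hDT, Finset.mem_biUnion, Finset.mem_erase, hI,
            Finset.mem_Ico]
          constructor
          · rintro ⟨⟨t, ht, ha⟩, hna⟩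
            refine ⟨t, ⟨?_, ht⟩, ha⟩
            rintro rfl
            have := hT1 _ ht; omega
          · rintro ⟨t, ⟨htne, ht⟩, ha⟩
            have := hother t ht htne
            exact ⟨⟨t, ht, ha⟩, by omega⟩
        refine ⟨hIsub, ?_, T.erase (n - k), ?_, ?_, hDsplit⟩
        · intro a ha
          rw [hDsplit] at ha
          simp only [Finset.mem_biUnion, Finset.mem_erase, Finset.mem_Ico,
            Finset.mem_range] at ha ⊢
          obtain ⟨t, ⟨htne, ht⟩, ha⟩ := ha
          have := hother t ht htne; omega
        · intro t ht
          simp only [Finset.mem_erase] at ht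
          exact hother t ht.2 ht.1
        · intro t ht t' ht' htt'
          simp only [Finset.mem_erase] at ht ht'
          exact hT2 t ht.2 t' ht'.2 htt'
      refine Finset.sum_nbij' (fun D' => D' ∪ I) (fun D => D \ I) ?_ ?_ ?_ ?_ ?_
      · intro D' hD'
        simp only [Finset.mem_filter, Finset.mem_powerset] at hD' ⊢
        simp only [IsBlockUnionNat] at hD' ⊢
        obtain ⟨hDr, T, hT1, hT2, hDT⟩ := hD'
        refine ⟨⟨?_, insert (n - k) T, ?_, ?_, ?_⟩, ?_⟩
        · intro a ha
          simp only [Finset.mem_union, hI, Finset.mem_Ico, Finset.mem_range] at ha ⊢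
          rcases ha with h | h
          · have := hDr h; simp only [Finset.mem_range] at this; omega
          · omega
        · intro t ht
          simp only [Finset.mem_insert] at ht
          rcases ht with rfl | ht
          · omega
          · have := hT1 t ht; omega
        · intro t ht t' ht' htt'
          simp only [Finset.mem_insert] at ht ht'
          rcases ht with rfl | ht <;> rcases ht' with rfl | ht'
          · omega
          · right; have := hT1 t' ht'; omega
          · left; have := hT1 t ht; omega
          · exact hT2 t ht t' ht' htt'
        · rw [Finset.biUnion_insert, hDT]
          have : Finset.Ico (n - k) (n - k + k) = I := by
            rw [hI]; congr 1; omega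
          rw [this, Finset.union_comm]
        · simp only [Finset.mem_union, hI, Finset.mem_Ico]
          right; omega
      · intro D hD
        simp only [Finset.mem_filter, Finset.mem_powerset] at hD
        obtain ⟨⟨hDr, hB⟩, hmem⟩ := hD
        obtain ⟨_, h1, h2⟩ := hstr D hDr hB hmem
        simp only [Finset.mem_filter, Finset.mem_powerset]
        exact ⟨h1, h2⟩
      · intro D' hD'
        simp only [Finset.mem_filter, Finset.mem_powerset] at hD'
        obtain ⟨hDr, _⟩ := hD'
        show (D' ∪ I) \ I = D'
        rw [Finset.union_sdiff_right]
        refine Finset.sdiff_eq_self_of_disjoint ?_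
        rw [Finset.disjoint_left]
        intro a ha
        have := hDr ha
        simp only [Finset.mem_range] at this
        simp only [hI, Finset.mem_Ico]
        omega
      · intro D hD
        simp only [Finset.mem_filter, Finset.mem_powerset] at hD
        obtain ⟨⟨hDr, hB⟩, hmem⟩ := hD
        obtain ⟨hIsub, _, _⟩ := hstr D hDr hB hmem
        show D \ I ∪ I = D
        exact Finset.sdiff_union_of_subset hIsub
      · intro D' hD'
        simp only [Finset.mem_filter, Finset.mem_powerset] at hD'
        obtain ⟨hDr, _⟩ := hD'
        show _ = ∏ i ∈ Finset.range n \ (D' ∪ I), x i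
        congr 1
        ext a
        simp only [Finset.mem_sdiff, Finset.mem_range, Finset.mem_union, hI, Finset.mem_Ico]
        constructor
        · rintro ⟨ha, hna⟩
          refine ⟨by omega, ?_⟩
          push_neg
          exact ⟨hna, by omega⟩
        · rintro ⟨ha, hna⟩
          push_neg at hna
          refine ⟨by omega, hna.1⟩
    · -- D's not containing n-1 ↔ block unions for n-1
      have hset : ((Finset.range n).powerset.filter (fun D => IsBlockUnionNat k n D)).filter
            (fun D => ¬ n - 1 ∈ D)
          = (Finset.range (n-1)).powerset.filter (fun D => IsBlockUnionNat k (n-1) D) := by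
        ext D
        simp only [Finset.mem_filter, Finset.mem_powerset]
        constructor
        · rintro ⟨⟨hDr, T, hT1, hT2, hDT⟩, hmem⟩
          have hblk : ∀ t ∈ T, t + k ≤ n - 1 := by
            intro t ht
            have h1 := hT1 t ht
            by_contra h
            apply hmem
            rw [hDT]
            simp only [Finset.mem_biUnion]
            exact ⟨t, ht, by simp only [Finset.mem_Ico]; omega⟩
          refine ⟨?_, T, hblk, hT2, hDT⟩
          intro a ha
          have h1 := hDr ha
          simp only [Finset.mem_range] at h1 ⊢
          rw [hDT] at ha
          simp only [Finset.mem_biUnion, Finset.mem_Ico] at ha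
          obtain ⟨t, ht, ha⟩ := ha
          have := hblk t ht; omega
        · rintro ⟨hDr, T, hT1, hT2, hDT⟩
          refine ⟨⟨?_, T, fun t ht => by have := hT1 t ht; omega, hT2, hDT⟩, ?_⟩
          · intro a ha
            have := hDr ha
            simp only [Finset.mem_range] at this ⊢
            omega
          · intro h
            have := hDr h
            simp only [Finset.mem_range] at this
            omega
      rw [hset]
      refine Finset.sum_congr rfl ?_
      intro D hD
      simp only [Finset.mem_filter, Finset.mem_powerset] at hD
      have hna : n - 1 ∉ D := by
        intro h
        have := hD.1 h
        simp only [Finset.mem_range] at this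
        omega
      have hsplit : Finset.range n \ D = insert (n - 1) (Finset.range (n - 1) \ D) := by
        ext a
        simp only [Finset.mem_sdiff, Finset.mem_range, Finset.mem_insert]
        constructor
        · rintro ⟨ha, hDa⟩
          rcases eq_or_ne a (n - 1) with rfl | h
          · exact Or.inl rfl
          · exact Or.inr ⟨by omega, hDa⟩
        · rintro (rfl | ⟨ha, hDa⟩)
          · exact ⟨by omega, hna⟩
          · exact ⟨by omega, hDa⟩
      rw [hsplit, Finset.prod_insert (by simp), mul_comm]
end

section
/- Every plane 0-1-2 tree on n vertices has exactly one levelwise numbering by the labels 1,...,n. -/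
/-- Plane 0-1-2 trees: either empty, or a root with a (possibly empty) left subtree
and a (possibly empty) right subtree. -/
inductive PTree : Type
  | nil : PTree
  | node : PTree → PTree → PTree

/-- The set of vertices of a plane 0-1-2 tree, encoded as root-to-vertex direction
lists (`false` = step to the left child, `true` = step to the right child). -/
def PTree.positions : PTree → Finset (List Bool)
  | .nil => ∅
  | .node l r =>
      insert [] ((l.positions.image (List.cons false)) ∪ (r.positions.image (List.cons true)))

/-- The level of a vertex: the number of right steps on the path from the root. -/
def PTree.level (p : List Bool) : ℕ := p.count true

namespace Stmt15Aux

/-- positions are prefix-closed. -/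
lemma mem_of_prefix : ∀ (t : PTree) {p q : List Bool},
    p ∈ t.positions → q <+: p → q ∈ t.positions := by
  intro t
  induction t with
  | nil => intro p q hp _; simp [PTree.positions] at hp
  | node l r ihl ihr =>
    intro p q hp hq
    simp only [PTree.positions, Finset.mem_insert, Finset.mem_union, Finset.mem_image] at hp ⊢
    rcases hp with rfl | hp
    · left; simpa using List.prefix_nil.mp hq
    · rcases hq with ⟨s, rfl⟩
      rcases hp with ⟨p', hp', hq'⟩ | ⟨p', hp', hq'⟩
      · cases q with
        | nil => exact Or.inl rfl
        | cons b q' =>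
          cases hq'
          refine Or.inr (Or.inl ⟨q', ihl hp' ⟨s, rfl⟩, rfl⟩)
      · cases q with
        | nil => exact Or.inl rfl
        | cons b q' =>
          cases hq'
          refine Or.inr (Or.inr ⟨q', ihr hp' ⟨s, rfl⟩, rfl⟩)

/-- Two lists, neither a prefix of the other, diverge after a common prefix. -/
lemma diverge : ∀ (p q : List Bool), ¬ p <+: q → ¬ q <+: p →
    ∃ w a r₁ r₂, p = w ++ a :: r₁ ∧ q = w ++ (!a) :: r₂ := by
  intro p
  induction p with
  | nil => intro q h _; exact absurd (List.nil_prefix) h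
  | cons a p' ih =>
    intro q h1 h2
    cases q with
    | nil => exact absurd (List.nil_prefix) h2
    | cons b q' =>
      by_cases hab : a = b
      · subst hab
        rw [List.cons_prefix_cons] at h1 h2
        simp only [true_and, not_and, not_true_eq_false, imp_false] at h1 h2
        obtain ⟨w, c, r₁, r₂, hp, hq⟩ := ih q' (by simpa using h1) (by simpa using h2)
        exact ⟨a :: w, c, r₁, r₂, by simp [hp], by simp [hq]⟩
      · refine ⟨[], a, p', q', by simp, ?_⟩
        have : b = !a := by
          cases a <;> cases b <;> simp_all
        simp [this]

/-- The key used to linearly order positions. -/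
def key (p : List Bool) : ℕ ×ₗ List Bool := toLex (PTree.level p, p.map not)

lemma key_injective : Function.Injective key := by
  intro p q h
  have h2 : p.map not = q.map not := congrArg (fun x => (ofLex x).2) h
  have := congrArg (List.map not) h2
  simpa [List.map_map, Function.comp_def] using this

lemma level_append_cons (w : List Bool) (a : Bool) (r : List Bool) :
    PTree.level (w ++ a :: r) = PTree.level w + (if a then 1 else 0) + PTree.level r := by
  cases a <;> simp [PTree.level, List.count_append, List.count_cons] <;> omega

lemma list_lt_append (l : List Bool) (a : Bool) (r : List Bool) : l < l ++ a :: r := by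
  induction l with
  | nil => exact List.Lex.nil
  | cons b l ih => exact List.Lex.cons ih

lemma list_lt_diverge (w : List Bool) (r₁ r₂ : List Bool) :
    (w ++ false :: r₁ : List Bool) < w ++ true :: r₂ := by
  induction w with
  | nil => exact List.Lex.rel (by decide)
  | cons b w ih => exact List.Lex.cons ih

lemma key_lt_of_level_lt {p q : List Bool} (h : PTree.level p < PTree.level q) :
    key p < key q := by
  rw [key, key, Prod.Lex.lt_iff]
  exact Or.inl h

lemma key_lt_left (p : List Bool) (r : List Bool)
    (hlev : PTree.level p = PTree.level (p ++ false :: r)) :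
    key p < key (p ++ false :: r) := by
  rw [key, key, Prod.Lex.lt_iff]
  right
  refine ⟨hlev, ?_⟩
  simpa using list_lt_append (p.map not) true (r.map not)

lemma key_lt_diverge (w r₁ r₂ : List Bool)
    (hlev : PTree.level (w ++ true :: r₁) = PTree.level (w ++ false :: r₂)) :
    key (w ++ true :: r₁) < key (w ++ false :: r₂) := by
  rw [key, key, Prod.Lex.lt_iff]
  right
  refine ⟨hlev, ?_⟩
  simpa using list_lt_diverge (w.map not) (r₁.map not) (r₂.map not)

end Stmt15Aux

open Stmt15Aux in
/-- Every plane 0-1-2 tree on `n` vertices has exactly one levelwise numbering: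
a bijective labeling `f` of its vertices by `Fin n` (equivalently by `1, …, n`)
such that (1) vertices at smaller level get smaller labels; (2) a vertex in the
left subtree of a vertex `p` gets a label larger than that of `p`; (3) if two
vertices `p, q` at the same level lie respectively in the right and in the left
subtree of a vertex `w` whose label is smaller than both of theirs, then the
label of `p` is smaller than the label of `q`. -/
theorem stmt15 (t : PTree) :
    ∃! f : {p : List Bool // p ∈ t.positions} → Fin t.positions.card,
      Function.Bijective f ∧
      (∀ p q, PTree.level p.1 < PTree.level q.1 → f p < f q) ∧
      (∀ p q, (p.1 ++ [false]) <+: q.1 → f p < f q) ∧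
      (∀ p q w, PTree.level p.1 = PTree.level q.1 → f w < f p → f w < f q →
        (w.1 ++ [true]) <+: p.1 → (w.1 ++ [false]) <+: q.1 → f p < f q) := by
  classical
  set S := {p : List Bool // p ∈ t.positions} with hS
  have keyinj : Function.Injective (key) := key_injective
  set K : Finset (ℕ ×ₗ List Bool) := t.positions.image key with hK
  have hcardK : K.card = t.positions.card := Finset.card_image_of_injective _ keyinj
  have kmem : ∀ p : S, key p.1 ∈ K := fun p => Finset.mem_image_of_mem _ p.2
  let kmap : S → {x // x ∈ K} := fun p => ⟨key p.1, kmem p⟩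
  have hkmapbij : Function.Bijective kmap := by
    constructor
    · intro p q h
      exact Subtype.ext (keyinj (congrArg Subtype.val h))
    · rintro ⟨x, hx⟩
      rw [hK, Finset.mem_image] at hx
      obtain ⟨p, hp, rfl⟩ := hx
      exact ⟨⟨p, hp⟩, rfl⟩
  let e : Fin t.positions.card ≃o {x // x ∈ K} := K.orderIsoOfFin hcardK
  let F : S → Fin t.positions.card := fun p => e.symm (kmap p)
  have hF : ∀ p q : S, F p < F q ↔ key p.1 < key q.1 := by
    intro p q
    show e.symm (kmap p) < e.symm (kmap q) ↔ _
    rw [e.symm.lt_iff_lt]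
    exact Subtype.coe_lt_coe.symm
  -- existence
  have hFbij : Function.Bijective F :=
    Function.Bijective.comp e.symm.toEquiv.bijective hkmapbij
  have hF1 : ∀ p q : S, PTree.level p.1 < PTree.level q.1 → F p < F q := by
    intro p q h
    exact (hF p q).mpr (key_lt_of_level_lt h)
  have hF2 : ∀ p q : S, (p.1 ++ [false]) <+: q.1 → F p < F q := by
    intro p q h
    obtain ⟨r, hr⟩ := h
    have hq : q.1 = p.1 ++ false :: r := by rw [← hr]; simp
    rw [hF p q, hq]
    have hlev : PTree.level p.1 ≤ PTree.level (p.1 ++ false :: r) := by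
      rw [level_append_cons]; simp
    rcases lt_or_eq_of_le hlev with h' | h'
    · exact key_lt_of_level_lt h'
    · exact key_lt_left p.1 r h'
  have hF3 : ∀ p q w : S, PTree.level p.1 = PTree.level q.1 → F w < F p → F w < F q →
      (w.1 ++ [true]) <+: p.1 → (w.1 ++ [false]) <+: q.1 → F p < F q := by
    intro p q w hlev _ _ hp hq
    obtain ⟨r₁, hr₁⟩ := hp
    obtain ⟨r₂, hr₂⟩ := hq
    have hp1 : p.1 = w.1 ++ true :: r₁ := by rw [← hr₁]; simp
    have hq1 : q.1 = w.1 ++ false :: r₂ := by rw [← hr₂]; simp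
    rw [hF p q, hp1, hq1]
    exact key_lt_diverge _ _ _ (by rw [← hp1, ← hq1]; exact hlev)
  refine ⟨F, ⟨hFbij, hF1, hF2, hF3⟩, ?_⟩
  -- uniqueness
  rintro f ⟨hfbij, h1, h2, h3⟩
  -- dichotomy: for distinct positions, the constraints decide the order, matching key
  have dich : ∀ p q : S, p.1 ≠ q.1 →
      (key p.1 < key q.1 ∧ f p < f q) ∨ (key q.1 < key p.1 ∧ f q < f p) := by
    intro p q hne
    rcases lt_trichotomy (PTree.level p.1) (PTree.level q.1) with hl | hl | hl
    · exact Or.inl ⟨key_lt_of_level_lt hl, h1 p q hl⟩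
    · -- same level
      by_cases hpq : p.1 <+: q.1
      · obtain ⟨r, hr⟩ := hpq
        cases r with
        | nil => exact absurd (by simpa using hr) hne
        | cons b r' =>
          have hb : b = false := by
            have := hl
            rw [← hr, level_append_cons] at this
            cases b
            · rfl
            · simp at this; omega
          subst hb
          have hpre : (p.1 ++ [false]) <+: q.1 := ⟨r', by rw [← hr]; simp⟩
          refine Or.inl ⟨?_, h2 p q hpre⟩
          have : key p.1 < key (p.1 ++ false :: r') :=
            key_lt_left p.1 r' (by rw [hr]; exact hl)
          rwa [hr] at this
      · by_cases hqp : q.1 <+: p.1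
        · obtain ⟨r, hr⟩ := hqp
          cases r with
          | nil => exact absurd (show p.1 = q.1 by simp at hr; rw [hr]) hne
          | cons b r' =>
            have hb : b = false := by
              have := hl
              rw [← hr, level_append_cons] at this
              cases b
              · rfl
              · simp at this; omega
            subst hb
            have hpre : (q.1 ++ [false]) <+: p.1 := ⟨r', by rw [← hr]; simp⟩
            refine Or.inr ⟨?_, h2 q p hpre⟩
            have : key q.1 < key (q.1 ++ false :: r') :=
              key_lt_left q.1 r' (by rw [hr]; exact hl.symm)
            rwa [hr] at this
        · obtain ⟨w, a, r₁, r₂, hp1, hq1⟩ := diverge p.1 q.1 hpq hqp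
          have hwmem : w ∈ t.positions :=
            mem_of_prefix t p.2 ⟨a :: r₁, hp1.symm⟩
          set W : S := ⟨w, hwmem⟩ with hW
          cases a with
          | true =>
            -- p in the right subtree of w, q in the left one
            simp only [Bool.not_true] at hq1
            have hlevwp : PTree.level W.1 < PTree.level p.1 := by
              rw [hp1, level_append_cons]; simp [hW, PTree.level]; omega
            have hlevwq : PTree.level W.1 < PTree.level q.1 := hl ▸ hlevwp
            have hfp := h1 W p hlevwp
            have hfq := h1 W q hlevwq
            have hpre1 : (W.1 ++ [true]) <+: p.1 := ⟨r₁, by rw [hp1]; simp [hW]⟩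
            have hpre2 : (W.1 ++ [false]) <+: q.1 := ⟨r₂, by rw [hq1]; simp [hW]⟩
            refine Or.inl ⟨?_, h3 p q W hl hfp hfq hpre1 hpre2⟩
            have : key (w ++ true :: r₁) < key (w ++ false :: r₂) :=
              key_lt_diverge w r₁ r₂ (by rw [← hp1, ← hq1]; exact hl)
            rwa [← hp1, ← hq1] at this
          | false =>
            simp only [Bool.not_false] at hq1
            have hlevwq : PTree.level W.1 < PTree.level q.1 := by
              rw [hq1, level_append_cons]; simp [hW, PTree.level]; omega
            have hlevwp : PTree.level W.1 < PTree.level p.1 := hl ▸ hlevwq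
            have hfp := h1 W p hlevwp
            have hfq := h1 W q hlevwq
            have hpre1 : (W.1 ++ [true]) <+: q.1 := ⟨r₂, by rw [hq1]; simp [hW]⟩
            have hpre2 : (W.1 ++ [false]) <+: p.1 := ⟨r₁, by rw [hp1]; simp [hW]⟩
            refine Or.inr ⟨?_, h3 q p W hl.symm hfq hfp hpre1 hpre2⟩
            have : key (w ++ true :: r₂) < key (w ++ false :: r₁) :=
              key_lt_diverge w r₂ r₁ (by rw [← hp1, ← hq1]; exact hl.symm)
            rwa [← hp1, ← hq1] at this
    · exact Or.inr ⟨key_lt_of_level_lt hl, h1 q p hl⟩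
  have hfkey : ∀ p q : S, key p.1 < key q.1 → f p < f q := by
    intro p q hk
    have hne : p.1 ≠ q.1 := fun h => absurd hk (by rw [h]; exact lt_irrefl _)
    rcases dich p q hne with ⟨_, h⟩ | ⟨hk', _⟩
    · exact h
    · exact absurd hk (asymm hk')
  -- transfer f to an order isomorphism from the key finset
  let km : S ≃ {x // x ∈ K} := Equiv.ofBijective kmap hkmapbij
  let f' : {x // x ∈ K} → Fin t.positions.card := fun x => f (km.symm x)
  have hkm : ∀ p : S, km.symm (kmap p) = p := fun p => km.symm_apply_apply p
  have hkey_of : ∀ x : {x // x ∈ K}, key ((km.symm x)).1 = x.1 := by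
    intro x
    have : kmap (km.symm x) = x := km.apply_symm_apply x
    exact congrArg Subtype.val this
  have hf'mono : StrictMono f' := by
    intro x y hxy
    apply hfkey
    rw [hkey_of, hkey_of]
    exact Subtype.coe_lt_coe.mpr hxy
  have hf'surj : Function.Surjective f' :=
    hfbij.2.comp km.symm.surjective
  let iso1 : {x // x ∈ K} ≃o Fin t.positions.card :=
    StrictMono.orderIsoOfSurjective f' hf'mono hf'surj
  have hsub : iso1 = e.symm := Subsingleton.elim _ _
  funext p
  have h1' : iso1 (kmap p) = f' (kmap p) := rfl
  have h2' : f' (kmap p) = f p := by rw [show f' (kmap p) = f (km.symm (kmap p)) from rfl, hkm]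
  calc f p = f' (kmap p) := h2'.symm
    _ = iso1 (kmap p) := rfl
    _ = e.symm (kmap p) := by rw [hsub]
    _ = F p := rfl
end

section
/- The map sending each k-Catalan path P of order n to its induced short k-Catalan–Spitzer permutation (label the up steps so labels increase right-to-left within each level and increase with level, then record the labels in path order) is injective. -/
/-- Height after the first `i` steps (`true` = up `(1,1)`, `false` = down `(1,1-k)`). -/
def pathHeight (k : ℕ) {m : ℕ} (s : Fin m → Bool) (i : ℕ) : ℤ :=
  ∑ t ∈ Finset.univ.filter (fun t : Fin m => (t : ℕ) < i),
    (if s t then 1 else 1 - (k : ℤ))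

/-- The (0-based) label of the up step `i` of the path `s`: up steps are numbered
so that labels increase right-to-left within each level (the level of an up step
being the height of its lower endpoint) and increase with the level.  Thus the
label of `i` is the number of up steps `j` whose level is smaller, or whose level
equals that of `i` and which lie further right. -/
def upLabel (k : ℕ) {m : ℕ} (s : Fin m → Bool) (i : Fin m) : ℕ :=
  (Finset.univ.filter (fun j : Fin m => s j = true ∧
    (pathHeight k s j < pathHeight k s i ∨
      (pathHeight k s j = pathHeight k s i ∧ i < j)))).card

/-- The short `k`-Catalan–Spitzer permutation induced by the path `s`: the sequence
of labels of the up steps, read in path order. -/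
def inducedWord (k : ℕ) {m : ℕ} (s : Fin m → Bool) : List ℕ :=
  ((List.finRange m).filter (fun i => s i = true)).map (upLabel k s)

namespace CS16

lemma height_zero (k : ℕ) {m : ℕ} (s : Fin m → Bool) : pathHeight k s 0 = 0 := by
  unfold pathHeight
  rw [Finset.filter_false_of_mem, Finset.sum_empty]
  intro t _
  omega

lemma height_succ (k : ℕ) {m : ℕ} (s : Fin m → Bool) (a : ℕ) (ha : a < m) :
    pathHeight k s (a + 1) =
      pathHeight k s a + (if s ⟨a, ha⟩ then 1 else 1 - (k : ℤ)) := by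
  unfold pathHeight
  have h : (Finset.univ.filter (fun t : Fin m => (t : ℕ) < a + 1))
      = insert (⟨a, ha⟩ : Fin m) (Finset.univ.filter (fun t : Fin m => (t : ℕ) < a)) := by
    ext t
    simp only [Finset.mem_filter, Finset.mem_univ, true_and, Finset.mem_insert, Fin.ext_iff]
    omega
  rw [h, Finset.sum_insert (by simp)]
  ring

lemma exists_up_at (k : ℕ) {m : ℕ} (hk : 2 ≤ k) (s : Fin m → Bool) (j : Fin m) (g : ℤ)
    (hg : 0 ≤ g) (hgj : g < pathHeight k s ↑j) :
    ∃ u : Fin m, s u = true ∧ pathHeight k s ↑u = g ∧ u < j := by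
  classical
  have h0 : pathHeight k s 0 ≤ g := by simpa [height_zero] using hg
  set a0 := Nat.findGreatest (fun a => pathHeight k s a ≤ g) ↑j with ha0
  have ha0P : pathHeight k s a0 ≤ g := by
    rw [ha0]
    exact Nat.findGreatest_spec (P := fun a => pathHeight k s a ≤ g) (Nat.zero_le _) h0
  have ha0le : a0 ≤ ↑j := by
    rw [ha0]
    exact Nat.findGreatest_le (P := fun a => pathHeight k s a ≤ g) _
  have ha0lt : a0 < ↑j := by
    rcases lt_or_eq_of_le ha0le with h | h
    · exact h
    · exfalso; rw [h] at ha0P; omega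
  have hnext : ¬ pathHeight k s (a0 + 1) ≤ g := by
    apply Nat.findGreatest_is_greatest (P := fun a => pathHeight k s a ≤ g)
      (n := ↑j) (by rw [← ha0]; omega) (by omega)
  have ham : a0 < m := lt_trans ha0lt j.isLt
  have hstep := height_succ k s a0 ham
  by_cases hu : s ⟨a0, ham⟩ = true
  · refine ⟨⟨a0, ham⟩, hu, ?_, ?_⟩
    · rw [hu] at hstep
      simp only [if_true] at hstep
      show pathHeight k s a0 = g
      omega
    · rw [Fin.lt_def]; exact ha0lt
  · exfalso
    rw [eq_false_of_ne_true hu] at hstep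
    simp at hstep
    have : (2 : ℤ) ≤ (k : ℤ) := by exact_mod_cast hk
    omega

/-- The lexicographic key of an up step. -/
def key (k : ℕ) {m : ℕ} (s : Fin m → Bool) (i : Fin m) : ℤ ×ₗ ℤ :=
  toLex (pathHeight k s ↑i, (m : ℤ) - (i : ℤ))

lemma key_lt_iff (k : ℕ) {m : ℕ} (s : Fin m → Bool) (i j : Fin m) :
    key k s j < key k s i ↔
      (pathHeight k s ↑j < pathHeight k s ↑i ∨
        (pathHeight k s ↑j = pathHeight k s ↑i ∧ i < j)) := by
  unfold key
  rw [Prod.Lex.lt_iff]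
  constructor
  · rintro (h | ⟨h1, h2⟩)
    · exact Or.inl h
    · refine Or.inr ⟨h1, ?_⟩
      rw [Fin.lt_def]
      simp only [ofLex_toLex] at h2 ⊢
      omega
  · rintro (h | ⟨h1, h2⟩)
    · exact Or.inl h
    · refine Or.inr ⟨h1, ?_⟩
      rw [Fin.lt_def] at h2
      simp only [ofLex_toLex] at h2 ⊢
      omega

lemma key_injective (k : ℕ) {m : ℕ} (s : Fin m → Bool) :
    Function.Injective (key k s) := by
  intro i j h
  unfold key at h
  have h2 : (m : ℤ) - (i : ℤ) = (m : ℤ) - (j : ℤ) := congrArg (fun p => (ofLex p).2) h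
  have h3 : (i : ℤ) = (j : ℤ) := by omega
  exact Fin.ext (by exact_mod_cast h3)

lemma upLabel_eq_card_key (k : ℕ) {m : ℕ} (s : Fin m → Bool) (i : Fin m) :
    upLabel k s i
      = (Finset.univ.filter (fun j : Fin m => s j = true ∧ key k s j < key k s i)).card := by
  unfold upLabel
  congr 1
  apply Finset.filter_congr
  intro j _
  rw [key_lt_iff]

lemma label_lt_of_key_lt (k : ℕ) {m : ℕ} (s : Fin m → Bool) {i j : Fin m}
    (hi : s i = true) (hj : s j = true) (h : key k s j < key k s i) :
    upLabel k s j < upLabel k s i := by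
  rw [upLabel_eq_card_key, upLabel_eq_card_key]
  apply Finset.card_lt_card
  constructor
  · intro z hz
    simp only [Finset.mem_filter, Finset.mem_univ, true_and] at hz ⊢
    exact ⟨hz.1, lt_trans hz.2 h⟩
  · intro hsub
    have hjmem : j ∈ Finset.univ.filter (fun z : Fin m => s z = true ∧ key k s z < key k s i) := by
      simp only [Finset.mem_filter, Finset.mem_univ, true_and]
      exact ⟨hj, h⟩
    have := hsub hjmem
    simp only [Finset.mem_filter, Finset.mem_univ, true_and] at this
    exact lt_irrefl _ this.2

lemma key_lt_of_label_lt (k : ℕ) {m : ℕ} (s : Fin m → Bool) {i j : Fin m}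
    (hi : s i = true) (hj : s j = true) (h : upLabel k s i < upLabel k s j) :
    key k s i < key k s j := by
  rcases lt_trichotomy (key k s i) (key k s j) with h' | h' | h'
  · exact h'
  · exact absurd (key_injective k s h') (by rintro rfl; exact lt_irrefl _ h)
  · exact absurd (label_lt_of_key_lt k s hi hj h') (by omega)

/-- The step lemma: if `i` and `j` are up steps with consecutive labels `c`, `c+1`,
then the level of `j` is the level of `i` plus one if `j` is right of `i`, and
equal to the level of `i` otherwise. -/
lemma label_succ_height (k : ℕ) {m : ℕ} (hk : 2 ≤ k) (s : Fin m → Bool)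
    (hpos : ∀ a : ℕ, a ≤ m → 0 ≤ pathHeight k s a)
    {i j : Fin m} (hi : s i = true) (hj : s j = true) (c : ℕ)
    (hci : upLabel k s i = c) (hcj : upLabel k s j = c + 1) :
    pathHeight k s ↑j = pathHeight k s ↑i + (if i < j then 1 else 0) := by
  have hne : i ≠ j := by rintro rfl; omega
  have hkey : key k s i < key k s j := key_lt_of_label_lt k s hi hj (by omega)
  have hrel := (key_lt_iff k s j i).mp hkey
  have hHi : (0:ℤ) ≤ pathHeight k s ↑i := hpos ↑i (le_of_lt i.isLt)
  rcases lt_or_gt_of_ne hne with hij | hji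
  · -- i < j
    rw [if_pos hij]
    have hHlt : pathHeight k s ↑i < pathHeight k s ↑j := by
      rcases hrel with h | ⟨h1, h2⟩
      · exact h
      · exact absurd h2 (not_lt_of_gt hij)
    by_contra hne'
    have h2 : pathHeight k s ↑i + 1 < pathHeight k s ↑j := by omega
    obtain ⟨u, hu, hHu, hult⟩ :=
      exists_up_at k hk s j (pathHeight k s ↑i + 1) (by omega) h2
    have l1 : upLabel k s i < upLabel k s u :=
      label_lt_of_key_lt k s hu hi ((key_lt_iff k s u i).mpr (Or.inl (by omega)))
    have l2 : upLabel k s u < upLabel k s j :=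
      label_lt_of_key_lt k s hj hu ((key_lt_iff k s j u).mpr (Or.inl (by omega)))
    omega
  · -- j < i
    rw [if_neg (not_lt_of_gt hji)]
    rcases hrel with h | ⟨h1, _⟩
    · exfalso
      obtain ⟨u, hu, hHu, hult⟩ :=
        exists_up_at k hk s j (pathHeight k s ↑i) hHi h
      have huli : u < i := lt_trans hult hji
      have l1 : upLabel k s i < upLabel k s u :=
        label_lt_of_key_lt k s hu hi
          ((key_lt_iff k s u i).mpr (Or.inr ⟨hHu.symm, huli⟩))
      have l2 : upLabel k s u < upLabel k s j :=
        label_lt_of_key_lt k s hj hu ((key_lt_iff k s j u).mpr (Or.inl (by omega)))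
      omega
    · omega

lemma label_zero_height (k : ℕ) {m : ℕ} (hk : 2 ≤ k) (s : Fin m → Bool)
    (hpos : ∀ a : ℕ, a ≤ m → 0 ≤ pathHeight k s a)
    {i : Fin m} (hi : s i = true) (h0 : upLabel k s i = 0) :
    pathHeight k s ↑i = 0 := by
  have hHi : (0:ℤ) ≤ pathHeight k s ↑i := hpos ↑i (le_of_lt i.isLt)
  by_contra hne
  have hgt : (0:ℤ) < pathHeight k s ↑i := lt_of_le_of_ne hHi (Ne.symm hne)
  obtain ⟨u, hu, hHu, _⟩ := exists_up_at k hk s i 0 le_rfl hgt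
  have : upLabel k s u < upLabel k s i :=
    label_lt_of_key_lt k s hi hu ((key_lt_iff k s i u).mpr (Or.inl (by omega)))
  omega

lemma exists_label_pred (k : ℕ) {m : ℕ} (s : Fin m → Bool)
    {i : Fin m} (hi : s i = true) (c : ℕ) (hc : upLabel k s i = c + 1) :
    ∃ y : Fin m, s y = true ∧ upLabel k s y = c := by
  classical
  set B := Finset.univ.filter (fun j : Fin m => s j = true ∧ key k s j < key k s i) with hB
  have hcard : B.card = c + 1 := by rw [← hc, upLabel_eq_card_key]
  have hne : B.Nonempty := Finset.card_pos.mp (by omega)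
  obtain ⟨y, hyB, hymax⟩ := Finset.exists_max_image B (key k s) hne
  have hyB' := hyB
  rw [hB, Finset.mem_filter] at hyB'
  refine ⟨y, hyB'.2.1, ?_⟩
  have hset : Finset.univ.filter (fun z : Fin m => s z = true ∧ key k s z < key k s y)
      = B.erase y := by
    ext z
    simp only [Finset.mem_filter, Finset.mem_univ, true_and, Finset.mem_erase, hB]
    constructor
    · rintro ⟨hz, hlt⟩
      exact ⟨fun h => (by rw [h] at hlt; exact lt_irrefl _ hlt),
        hz, lt_trans hlt hyB'.2.2⟩
    · rintro ⟨hzy, hz, hlt⟩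
      refine ⟨hz, ?_⟩
      have hle : key k s z ≤ key k s y := hymax z (by rw [hB, Finset.mem_filter]; exact ⟨Finset.mem_univ _, hz, hlt⟩)
      exact lt_of_le_of_ne hle (fun h => hzy (key_injective k s h))
  rw [upLabel_eq_card_key, hset, Finset.card_erase_of_mem hyB, hcard]
  omega

/-- The list of up-step positions. -/
def upList {m : ℕ} (s : Fin m → Bool) : List (Fin m) :=
  (List.finRange m).filter (fun i => s i = true)

lemma inducedWord_eq (k : ℕ) {m : ℕ} (s : Fin m → Bool) :
    inducedWord k s = (upList s).map (upLabel k s) := rfl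

lemma upList_pairwise {m : ℕ} (s : Fin m → Bool) :
    List.Pairwise (· < ·) (upList s) :=
  List.Pairwise.filter _ (List.pairwise_lt_finRange m)

lemma mem_upList {m : ℕ} (s : Fin m → Bool) (x : Fin m) :
    x ∈ upList s ↔ s x = true := by
  simp [upList, List.mem_filter]

lemma upList_get_mono {m : ℕ} (s : Fin m → Bool) {a b : Fin (upList s).length}
    (h : a < b) : (upList s).get a < (upList s).get b :=
  List.pairwise_iff_get.mp (upList_pairwise s) a b h

lemma upList_get_strictMono {m : ℕ} (s : Fin m → Bool) {a b : Fin (upList s).length} :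
    (upList s).get a < (upList s).get b ↔ a < b := by
  constructor
  · intro h
    rcases lt_trichotomy a b with h' | h' | h'
    · exact h'
    · subst h'; exact absurd h (lt_irrefl _)
    · exact absurd (upList_get_mono s h') (not_lt_of_gt h)
  · exact upList_get_mono s

lemma upList_count {m : ℕ} (s : Fin m → Bool) (t : Fin (upList s).length) :
    (Finset.univ.filter (fun y : Fin m => s y = true ∧ y < (upList s).get t)).card = ↑t := by
  classical
  apply Finset.card_eq_of_bijective
    (fun i h => (upList s).get ⟨i, lt_trans h t.isLt⟩)
  · intro a ha
    simp only [Finset.mem_filter, Finset.mem_univ, true_and] at ha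
    obtain ⟨r, hr⟩ := List.mem_iff_get.mp ((mem_upList s a).mpr ha.1)
    have hrt : r < t := by
      rcases lt_trichotomy r t with h' | h' | h'
      · exact h'
      · subst h'; rw [hr] at ha; exact absurd ha.2 (lt_irrefl _)
      · exact absurd (lt_trans ha.2 (upList_get_mono s h')) (by rw [hr]; exact lt_irrefl _)
    exact ⟨↑r, hrt, by rw [← hr]⟩
  · intro i h
    simp only [Finset.mem_filter, Finset.mem_univ, true_and]
    constructor
    · exact (mem_upList s _).mp (List.get_mem _ _)
    · exact upList_get_mono s (by exact h)
  · intro a b ha hb hab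
    have := (upList_get_strictMono s (a := ⟨a, lt_trans ha t.isLt⟩) (b := ⟨b, lt_trans hb t.isLt⟩))
    rcases lt_trichotomy a b with h' | h' | h'
    · exact absurd (upList_get_mono s (a := ⟨a, _⟩) (b := ⟨b, _⟩) h') (by rw [hab]; exact lt_irrefl _)
    · exact h'
    · exact absurd (upList_get_mono s (a := ⟨b, _⟩) (b := ⟨a, _⟩) h') (by rw [hab]; exact lt_irrefl _)

lemma height_lt_of_all_down (k : ℕ) {m : ℕ} (hk : 2 ≤ k) (s : Fin m → Bool)
    (i q : ℕ) (hiq : i < q) (hq : q ≤ m)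
    (hdown : ∀ p : Fin m, i ≤ ↑p → ↑p < q → s p = false) :
    pathHeight k s q < pathHeight k s i := by
  have hk' : (2 : ℤ) ≤ (k : ℤ) := by exact_mod_cast hk
  have main : ∀ a : ℕ, i < a → a ≤ q → pathHeight k s a ≤ pathHeight k s i - ((a : ℤ) - (i : ℤ)) := by
    intro a
    induction a with
    | zero => omega
    | succ b ih =>
      intro h1 h2
      have hbm : b < m := by omega
      have hb_down : s ⟨b, hbm⟩ = false := hdown ⟨b, hbm⟩ (show i ≤ b by omega) (show b < q by omega)
      have hstep := height_succ k s b hbm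
      rw [hb_down] at hstep
      simp at hstep
      by_cases hbi : i < b
      · have := ih hbi (by omega)
        push_cast
        omega
      · have hbi' : b = i := by omega
        subst hbi'
        push_cast
        omega
  have := main q hiq le_rfl
  omega

lemma height_prefix_eq (k : ℕ) {m : ℕ} (s s' : Fin m → Bool) (i : ℕ)
    (hpre : ∀ p : Fin m, (p : ℕ) < i → s p = s' p) :
    pathHeight k s i = pathHeight k s' i := by
  unfold pathHeight
  apply Finset.sum_congr rfl
  intro t ht
  simp only [Finset.mem_filter] at ht
  rw [hpre t ht.2]

theorem key_contra (k : ℕ) {m : ℕ} (hk : 2 ≤ k) (s s' : Fin m → Bool)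
    (hs_pos : ∀ a : ℕ, a ≤ m → 0 ≤ pathHeight k s a)
    (hs'_pos : ∀ a : ℕ, a ≤ m → 0 ≤ pathHeight k s' a)
    (hword : inducedWord k s = inducedWord k s')
    (i : Fin m) (hpre : ∀ p : Fin m, (p : ℕ) < (i : ℕ) → s p = s' p)
    (hsi : s i = true) (hs'i : s' i = false) : False := by
  classical
  have hlen : (upList s).length = (upList s').length := by
    have := congrArg List.length hword
    rwa [inducedWord_eq, inducedWord_eq, List.length_map, List.length_map] at this
  -- word entries equal
  have wordEq : ∀ (c : ℕ) (h : c < (upList s).length) (h' : c < (upList s').length),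
      upLabel k s ((upList s).get ⟨c, h⟩) = upLabel k s' ((upList s').get ⟨c, h'⟩) := by
    intro c h h'
    have pf1 : c < (inducedWord k s).length := by
      rw [inducedWord_eq, List.length_map]; exact h
    have pf2 : c < (inducedWord k s').length := by
      rw [inducedWord_eq, List.length_map]; exact h'
    have h1 : (inducedWord k s).get ⟨c, pf1⟩ = (inducedWord k s').get ⟨c, pf2⟩ :=
      List.get_of_eq hword _
    have e1 : (inducedWord k s).get ⟨c, pf1⟩ = upLabel k s ((upList s).get ⟨c, h⟩) := by
      simp [inducedWord_eq, List.get_eq_getElem, List.getElem_map]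
    have e2 : (inducedWord k s').get ⟨c, pf2⟩ = upLabel k s' ((upList s').get ⟨c, h'⟩) := by
      simp [inducedWord_eq, List.get_eq_getElem, List.getElem_map]
    rw [e1, e2] at h1
    exact h1
  -- main claim: heights at the same word position agree
  have MC : ∀ (ℓ : ℕ) (c : ℕ) (h : c < (upList s).length) (h' : c < (upList s').length),
      upLabel k s ((upList s).get ⟨c, h⟩) = ℓ →
      pathHeight k s ↑((upList s).get ⟨c, h⟩) = pathHeight k s' ↑((upList s').get ⟨c, h'⟩) := by
    intro ℓ
    induction ℓ with
    | zero =>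
      intro c h h' hlab
      have hup : s ((upList s).get ⟨c, h⟩) = true := (mem_upList s _).mp (List.get_mem _ _)
      have hup' : s' ((upList s').get ⟨c, h'⟩) = true := (mem_upList s' _).mp (List.get_mem _ _)
      have hlab' : upLabel k s' ((upList s').get ⟨c, h'⟩) = 0 := by
        rw [← wordEq c h h', hlab]
      rw [label_zero_height k hk s hs_pos hup hlab,
        label_zero_height k hk s' hs'_pos hup' hlab']
    | succ ℓ ih =>
      intro c h h' hlab
      have hup : s ((upList s).get ⟨c, h⟩) = true := (mem_upList s _).mp (List.get_mem _ _)
      have hup' : s' ((upList s').get ⟨c, h'⟩) = true := (mem_upList s' _).mp (List.get_mem _ _)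
      have hlab' : upLabel k s' ((upList s').get ⟨c, h'⟩) = ℓ + 1 := by
        rw [← wordEq c h h', hlab]
      obtain ⟨y, hy, hylab⟩ := exists_label_pred k s hup ℓ hlab
      obtain ⟨t0, ht0⟩ := List.mem_iff_get.mp ((mem_upList s y).mpr hy)
      have ht0' : (t0 : ℕ) < (upList s').length := hlen ▸ t0.isLt
      have hylab' : upLabel k s' ((upList s').get ⟨↑t0, ht0'⟩) = ℓ := by
        rw [← wordEq ↑t0 (by exact t0.isLt) ht0']
        simp only [Fin.eta]
        rw [ht0, hylab]
      have ihEq : pathHeight k s ↑((upList s).get t0)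
          = pathHeight k s' ↑((upList s').get ⟨↑t0, ht0'⟩) := by
        have := ih ↑t0 t0.isLt ht0' (by rw [Fin.eta, ht0, hylab])
        simpa using this
      have hyup' : s' ((upList s').get ⟨↑t0, ht0'⟩) = true :=
        (mem_upList s' _).mp (List.get_mem _ _)
      have step1 := label_succ_height k hk s hs_pos (i := (upList s).get t0)
        (j := (upList s).get ⟨c, h⟩) (by rw [ht0]; exact hy) hup ℓ (by rw [ht0]; exact hylab) hlab
      have step2 := label_succ_height k hk s' hs'_pos (i := (upList s').get ⟨↑t0, ht0'⟩)
        (j := (upList s').get ⟨c, h'⟩) hyup' hup' ℓ hylab' hlab'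
      have hne1 : (t0 : ℕ) ≠ c := by
        intro hEq
        have hgg : (upList s).get t0 = (upList s).get ⟨c, h⟩ := by
          congr 1
          exact Fin.ext hEq
        rw [← ht0, hgg, hlab] at hylab
        omega
      have hordEq : ((upList s).get t0 < (upList s).get ⟨c, h⟩)
          ↔ ((upList s').get ⟨↑t0, ht0'⟩ < (upList s').get ⟨c, h'⟩) := by
        rw [upList_get_strictMono, upList_get_strictMono]
        simp [Fin.lt_def]
      by_cases hord : (upList s).get t0 < (upList s).get ⟨c, h⟩
      · rw [step1, step2, if_pos hord, if_pos (hordEq.mp hord), ihEq]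
      · rw [step1, step2, if_neg hord, if_neg (fun hh => hord (hordEq.mpr hh)), ihEq]
  -- now derive the contradiction
  obtain ⟨t, ht⟩ := List.mem_iff_get.mp ((mem_upList s i).mpr hsi)
  have htlen' : (t : ℕ) < (upList s').length := hlen ▸ t.isLt
  set q := (upList s').get ⟨↑t, htlen'⟩ with hq
  have hs'q : s' q = true := (mem_upList s' _).mp (List.get_mem _ _)
  -- counts
  have hcount_s : (Finset.univ.filter (fun y : Fin m => s y = true ∧ y < i)).card = ↑t := by
    rw [← ht]; exact upList_count s t
  have hcount_s' : (Finset.univ.filter (fun y : Fin m => s' y = true ∧ y < q)).card = ↑t :=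
    upList_count s' ⟨↑t, htlen'⟩
  have hsets : (Finset.univ.filter (fun y : Fin m => s y = true ∧ y < i))
      = (Finset.univ.filter (fun y : Fin m => s' y = true ∧ y < i)) := by
    apply Finset.filter_congr
    intro y _
    constructor
    · rintro ⟨h1, h2⟩; exact ⟨(hpre y h2).symm ▸ h1, h2⟩
    · rintro ⟨h1, h2⟩; exact ⟨(hpre y h2) ▸ h1, h2⟩
  have hcount2 : (Finset.univ.filter (fun y : Fin m => s' y = true ∧ y < i)).card = ↑t := by
    rw [← hsets]; exact hcount_s
  have hqi : i < q := by
    rcases lt_trichotomy q i with h' | h' | h'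
    · exfalso
      have hsub : (Finset.univ.filter (fun y : Fin m => s' y = true ∧ y < q))
          ⊂ (Finset.univ.filter (fun y : Fin m => s' y = true ∧ y < i)) := by
        constructor
        · intro z hz
          simp only [Finset.mem_filter, Finset.mem_univ, true_and] at hz ⊢
          exact ⟨hz.1, lt_trans hz.2 h'⟩
        · intro hsub2
          have : q ∈ Finset.univ.filter (fun y : Fin m => s' y = true ∧ y < q) :=
            hsub2 (by simp only [Finset.mem_filter, Finset.mem_univ, true_and]; exact ⟨hs'q, h'⟩)
          simp only [Finset.mem_filter, Finset.mem_univ, true_and] at this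
          exact lt_irrefl _ this.2
      have := Finset.card_lt_card hsub
      omega
    · exfalso
      rw [h'] at hs'q
      rw [hs'q] at hs'i
      simp at hs'i
    · exact h'
  -- all steps of s' in [i, q) are down
  have hdown : ∀ p : Fin m, (i : ℕ) ≤ ↑p → (p : ℕ) < ↑q → s' p = false := by
    intro p hp1 hp2
    by_contra hptrue
    have hptrue' : s' p = true := by
      cases hsp : s' p
      · exact absurd hsp hptrue
      · rfl
    have hpi : i ≠ p := by
      intro hEq; rw [← hEq, hs'i] at hptrue'; exact Bool.false_ne_true hptrue'
    have hpi' : (i : ℕ) < ↑p := lt_of_le_of_ne hp1 (fun hh => hpi (Fin.ext hh))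
    have hsub : insert p (Finset.univ.filter (fun y : Fin m => s' y = true ∧ y < i))
        ⊆ (Finset.univ.filter (fun y : Fin m => s' y = true ∧ y < q)) := by
      intro z hz
      rcases Finset.mem_insert.mp hz with rfl | hz2
      · simp only [Finset.mem_filter, Finset.mem_univ, true_and]
        exact ⟨hptrue', Fin.lt_def.mpr hp2⟩
      · simp only [Finset.mem_filter, Finset.mem_univ, true_and] at hz2 ⊢
        exact ⟨hz2.1, lt_trans hz2.2 hqi⟩
    have hcard := Finset.card_le_card hsub
    rw [Finset.card_insert_of_notMem (by
      simp only [Finset.mem_filter, Finset.mem_univ, true_and, not_and]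
      intro _ hlt
      exact absurd (Fin.lt_def.mp hlt) (by omega))] at hcard
    omega
  -- heights
  have hpref : pathHeight k s ↑i = pathHeight k s' ↑i :=
    height_prefix_eq k s s' ↑i (fun p hp => hpre p hp)
  have hdrop : pathHeight k s' ↑q < pathHeight k s' ↑i :=
    height_lt_of_all_down k hk s' ↑i ↑q (Fin.lt_def.mp hqi) (le_of_lt q.isLt) hdown
  have hMC := MC (upLabel k s ((upList s).get t)) ↑t t.isLt htlen' (by rw [Fin.eta])
  rw [Fin.eta] at hMC
  rw [ht] at hMC
  rw [← hq] at hMC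
  omega

end CS16

/-- The map sending each `k`-Catalan path of order `n` (a path with `(k-1)n` up
steps `(1,1)` and `n` down steps `(1,1-k)` that never goes below the x-axis) to its
induced short `k`-Catalan–Spitzer permutation is injective. -/
theorem stmt16 (k n : ℕ) (hk : 2 ≤ k) (s s' : Fin (k * n) → Bool)
    (hs_down : (Finset.univ.filter (fun i => s i = false)).card = n)
    (hs'_down : (Finset.univ.filter (fun i => s' i = false)).card = n)
    (hs_pos : ∀ i : ℕ, i ≤ k * n → 0 ≤ pathHeight k s i)
    (hs'_pos : ∀ i : ℕ, i ≤ k * n → 0 ≤ pathHeight k s' i)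
    (hword : inducedWord k s = inducedWord k s') :
    s = s' := by
  classical
  by_contra hne
  have hex : ∃ a : ℕ, ∃ ha : a < k * n, s ⟨a, ha⟩ ≠ s' ⟨a, ha⟩ := by
    by_contra h
    push_neg at h
    apply hne
    funext p
    have := h ↑p p.isLt
    simpa using this
  set P : ℕ → Prop := fun a => ∃ ha : a < k * n, s ⟨a, ha⟩ ≠ s' ⟨a, ha⟩ with hP
  letI : DecidablePred P := Classical.decPred P
  obtain ⟨ha0, hdiff⟩ := Nat.find_spec hex
  set a0 := Nat.find hex with ha0def
  have hmin : ∀ b : Fin (k * n), (b : ℕ) < a0 → s b = s' b := by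
    intro b hb
    by_contra hbne
    exact absurd (Nat.find_le (n := ↑b) (h := hex) (show P ↑b from ⟨b.isLt, by simpa using hbne⟩)) (by omega)
  set i : Fin (k * n) := ⟨a0, ha0⟩ with hi
  cases hsi : s i
  · cases hs'i : s' i
    · exact hdiff (by rw [hsi, hs'i])
    · exact CS16.key_contra k hk s' s hs'_pos hs_pos hword.symm i
        (fun p hp => (hmin p hp).symm) hs'i hsi
  · cases hs'i : s' i
    · exact CS16.key_contra k hk s s' hs_pos hs'_pos hword i
        (fun p hp => hmin p hp) hsi hs'i
    · exact hdiff (by rw [hsi, hs'i])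
end
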